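/- arXiv:quant-ph/0009038 — 10 statements merged into one kernel-verified Lean document; each statement's English description precedes it below -/
import Mathlib

section
/- An ortholattice L satisfies, for all a, b, c ∈ L, the inequality (a ≡ b) ⊓ (b ≡ c) ≤ (a ≡ c) if and only if L is orthomodular. -/
/-- An ortholattice: a bounded lattice with an orthocomplementation. -/
class Ortholattice (α : Type*) extends Lattice α, BoundedOrder α, Compl α where
  compl_compl : ∀ x : α, xᶜᶜ = x
  compl_antitone : ∀ x y : α, x ≤ y → yᶜ ≤ xᶜ
  inf_compl : ∀ x : α, x ⊓ xᶜ = ⊥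
  sup_compl : ∀ x : α, x ⊔ xᶜ = ⊤

/-- The identity operation `a ≡ b = (a ⊓ b) ⊔ (aᶜ ⊓ bᶜ)`. -/
def olEquiv {α : Type*} [Ortholattice α] (a b : α) : α := (a ⊓ b) ⊔ (aᶜ ⊓ bᶜ)

namespace OLAux

variable {α : Type*} [Ortholattice α]

lemma cc (x : α) : xᶜᶜ = x := Ortholattice.compl_compl x

lemma anti {x y : α} (h : x ≤ y) : yᶜ ≤ xᶜ := Ortholattice.compl_antitone x y h

lemma le_of_compl_le {x y : α} (h : yᶜ ≤ xᶜ) : x ≤ y := by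
  have := anti h; rwa [cc, cc] at this

lemma compl_inj {x y : α} (h : xᶜ = yᶜ) : x = y := by rw [← cc x, ← cc y, h]

lemma dm_sup (x y : α) : (x ⊔ y)ᶜ = xᶜ ⊓ yᶜ := by
  apply le_antisymm
  · exact le_inf (anti le_sup_left) (anti le_sup_right)
  · apply le_of_compl_le
    rw [cc]
    refine sup_le ?_ ?_
    · have : xᶜ ⊓ yᶜ ≤ xᶜ := inf_le_left
      have := anti this; rwa [cc] at this
    · have : xᶜ ⊓ yᶜ ≤ yᶜ := inf_le_right
      have := anti this; rwa [cc] at this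

lemma dm_inf (x y : α) : (x ⊓ y)ᶜ = xᶜ ⊔ yᶜ := by
  apply compl_inj
  rw [dm_sup, cc, cc, cc]

lemma cbot : (⊥ : α)ᶜ = ⊤ := by
  have := Ortholattice.sup_compl (⊥ : α)
  simpa using this

lemma ctop : (⊤ : α)ᶜ = ⊥ := by
  have := Ortholattice.inf_compl (⊤ : α)
  simpa using this

lemma ics (x : α) : x ⊓ xᶜ = ⊥ := Ortholattice.inf_compl x

lemma ics' (x : α) : xᶜ ⊓ x = ⊥ := by rw [inf_comm]; exact ics x

/-- `x` commutes with `y`. -/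
def Cm (x y : α) : Prop := x = (x ⊓ y) ⊔ (x ⊓ yᶜ)

lemma cm_compl_right {x y : α} (h : Cm x y) : Cm x yᶜ := by
  unfold Cm at *
  rw [cc, sup_comm]
  exact h

section OM

variable (om : ∀ a b : α, a ≤ b → a ⊔ (aᶜ ⊓ b) = b)

include om in
/-- Dual orthomodular law. -/
lemma doml {x y : α} (h : y ≤ x) : x ⊓ (xᶜ ⊔ y) = y := by
  have h2 : xᶜ ≤ yᶜ := anti h
  have h3 := om _ _ h2
  apply compl_inj
  rw [dm_inf, dm_sup, cc]
  rwa [cc] at h3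

include om in
lemma cm_symm {x y : α} (h : Cm x y) : Cm y x := by
  have s1 : x ⊔ yᶜ = (x ⊓ y) ⊔ yᶜ := by
    conv_lhs => rw [h]
    rw [sup_assoc, sup_eq_right.mpr (inf_le_right : x ⊓ yᶜ ≤ yᶜ)]
  have s2 : y ⊓ (x ⊔ yᶜ) = x ⊓ y := by
    rw [s1, sup_comm]
    exact doml om inf_le_right
  have s3 : (x ⊓ y)ᶜ = yᶜ ⊔ (xᶜ ⊓ y) := by
    rw [← s2, dm_inf, dm_sup, cc]
  have s4 : y = (x ⊓ y) ⊔ ((x ⊓ y)ᶜ ⊓ y) := (om _ _ inf_le_right).symm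
  have s5 : (x ⊓ y)ᶜ ⊓ y = xᶜ ⊓ y := by
    rw [s3, inf_comm]
    exact doml om inf_le_right
  unfold Cm
  rw [inf_comm y x, inf_comm y xᶜ, ← s5]
  exact s4

include om in
lemma cm_inf {b x y : α} (hx : Cm b x) (hy : Cm b y) : Cm b (x ⊓ y) := by
  set l := (b ⊓ (x ⊓ y)) ⊔ (b ⊓ (x ⊓ y)ᶜ) with hl
  have hlb : l ≤ b := sup_le inf_le_left inf_le_left
  set e := lᶜ ⊓ b with he
  have hb : l ⊔ e = b := om _ _ hlb
  -- facts about e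
  have heb : e ≤ b := inf_le_right
  have hel : e ≤ lᶜ := inf_le_left
  have he1 : e ≤ (b ⊓ (x ⊓ y))ᶜ := le_trans hel (anti le_sup_left)
  have he2 : e ≤ (b ⊓ (x ⊓ y)ᶜ)ᶜ := le_trans hel (anti le_sup_right)
  have he2' : e ≤ bᶜ ⊔ (x ⊓ y) := by rwa [dm_inf, cc] at he2
  -- e ≤ x
  have key : ∀ z : α, Cm b z → e ≤ bᶜ ⊔ z → e ≤ z := by
    intro z hz hez
    have hzc : Cm zᶜ b := cm_symm om (cm_compl_right hz)
    have hzz : z = (zᶜ ⊓ b)ᶜ ⊓ (zᶜ ⊓ bᶜ)ᶜ := by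
      apply compl_inj
      rw [dm_inf, cc, cc]
      exact hzc
    rw [hzz]
    refine le_inf ?_ ?_
    · rw [dm_inf, cc]
      exact le_trans hez (sup_le le_sup_right le_sup_left)
    · rw [dm_inf, cc, cc]
      exact le_trans heb le_sup_right
  have hex : e ≤ x := key x hx (le_trans he2' (sup_le le_sup_left
    (le_trans inf_le_left le_sup_right)))
  have hey : e ≤ y := key y hy (le_trans he2' (sup_le le_sup_left
    (le_trans inf_le_right le_sup_right)))
  have hexy : e ≤ b ⊓ (x ⊓ y) := le_inf heb (le_inf hex hey)
  have hele : e ≤ l := le_trans hexy le_sup_left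
  have hebot : e ≤ ⊥ := by
    have : e ≤ l ⊓ lᶜ := le_inf hele hel
    rwa [ics] at this
  have heeq : e = ⊥ := le_antisymm hebot bot_le
  rw [heeq, sup_bot_eq] at hb
  exact hb.symm

include om in
/-- Foulis–Holland distributivity. -/
lemma fh {b x y : α} (hx : Cm b x) (hy : Cm b y) :
    b ⊓ (x ⊔ y) = (b ⊓ x) ⊔ (b ⊓ y) := by
  set l := (b ⊓ x) ⊔ (b ⊓ y) with hl
  set r := b ⊓ (x ⊔ y) with hr
  have hlr : l ≤ r :=
    sup_le (le_inf inf_le_left (le_trans inf_le_right le_sup_left))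
      (le_inf inf_le_left (le_trans inf_le_right le_sup_right))
  set e := lᶜ ⊓ r with he
  have hrb : l ⊔ e = r := om _ _ hlr
  have heb : e ≤ b := le_trans inf_le_right inf_le_left
  have hexy : e ≤ x ⊔ y := le_trans inf_le_right inf_le_right
  have hel : e ≤ lᶜ := inf_le_left
  have key : ∀ z : α, Cm b z → e ≤ (b ⊓ z)ᶜ → e ≤ zᶜ := by
    intro z hz hez
    have hzb : Cm z b := cm_symm om hz
    have hzz : zᶜ = (z ⊓ b)ᶜ ⊓ (z ⊓ bᶜ)ᶜ := by
      apply compl_inj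
      rw [dm_inf, cc, cc, cc]
      exact hzb
    rw [hzz]
    refine le_inf ?_ ?_
    · rwa [inf_comm z b]
    · rw [dm_inf, cc]
      exact le_trans heb le_sup_right
  have hex : e ≤ xᶜ := key x hx (le_trans hel (anti le_sup_left))
  have hey : e ≤ yᶜ := key y hy (le_trans hel (anti le_sup_right))
  have hebot : e = ⊥ := by
    apply le_antisymm _ bot_le
    have h1 : e ≤ (x ⊔ y)ᶜ := by rw [dm_sup]; exact le_inf hex hey
    have := le_inf hexy h1
    rwa [ics] at this
  rw [hebot, sup_bot_eq] at hrb
  exact hrb.symm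

include om in
lemma cm_of_le {b z : α} (h : z ≤ b) : Cm b z := by
  unfold Cm
  have h1 : b ⊓ z = z := inf_eq_right.mpr h
  have h2 := om z b h
  rw [h1, inf_comm]
  exact h2.symm

lemma cm_of_le_compl {b z : α} (h : z ≤ bᶜ) : Cm b z := by
  unfold Cm
  have h1 : b ⊓ z = ⊥ := by
    apply le_antisymm _ bot_le
    have : b ⊓ z ≤ b ⊓ bᶜ := inf_le_inf_left b h
    rwa [ics] at this
  have h2 : b ⊓ zᶜ = b := by
    apply inf_eq_left.mpr
    have := anti h
    rwa [cc] at this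
  rw [h1, h2, bot_sup_eq]

end OM

end OLAux

open OLAux in
/-- An ortholattice satisfies `(a ≡ b) ⊓ (b ≡ c) ≤ (a ≡ c)` for all `a b c`
iff it is orthomodular. -/
theorem stmt_0 (α : Type*) [Ortholattice α] :
    (∀ a b c : α, olEquiv a b ⊓ olEquiv b c ≤ olEquiv a c) ↔
      (∀ a b : α, a ≤ b → a ⊔ (aᶜ ⊓ b) = b) := by
  constructor
  · -- transitivity → orthomodular
    intro h a b hab
    set a' := a ⊔ (aᶜ ⊓ b) with ha'
    have ha'b : a' ≤ b := sup_le hab inf_le_right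
    have hbot : a'ᶜ ⊓ b = ⊥ := by
      apply le_antisymm _ bot_le
      have h1 : a'ᶜ ⊓ b ≤ (aᶜ ⊓ b) ⊓ (aᶜ ⊓ b)ᶜ := by
        refine le_inf (le_inf ?_ inf_le_right) ?_
        · exact le_trans inf_le_left (by rw [ha', dm_sup]; exact inf_le_left)
        · exact le_trans inf_le_left (by rw [ha', dm_sup]; exact inf_le_right)
      rwa [ics] at h1
    have htop : a' ⊔ bᶜ = ⊤ := by
      apply compl_inj
      rw [dm_sup, cc, ctop]
      exact hbot
    have hba' : olEquiv b a' = ⊤ := by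
      unfold olEquiv
      have e1 : b ⊓ a' = a' := inf_eq_right.mpr ha'b
      have e2 : bᶜ ⊓ a'ᶜ = bᶜ := inf_eq_left.mpr (anti ha'b)
      rw [e1, e2, htop]
    have ha'bot : olEquiv a' (⊥ : α) = a'ᶜ := by
      unfold olEquiv
      rw [cbot]
      simp
    have hbbot : olEquiv b (⊥ : α) = bᶜ := by
      unfold olEquiv
      rw [cbot]
      simp
    have := h b a' ⊥
    rw [hba', ha'bot, hbbot, top_inf_eq] at this
    exact le_antisymm ha'b (le_of_compl_le this)
  · -- orthomodular → transitivity
    intro om a b c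
    set f := olEquiv a b with hf
    set g := olEquiv b c with hg
    set d := f ⊓ g with hd
    -- f commutes with b
    have hfb : Cm f b := by
      unfold Cm
      apply le_antisymm
      · rw [hf]
        unfold olEquiv
        refine sup_le ?_ ?_
        · exact le_trans (le_inf le_sup_left inf_le_right) le_sup_left
        · exact le_trans (le_inf le_sup_right inf_le_right) le_sup_right
      · exact sup_le inf_le_left inf_le_left
    have hgb : Cm g b := by
      unfold Cm
      apply le_antisymm
      · rw [hg]
        unfold olEquiv
        refine sup_le ?_ ?_
        · exact le_trans (le_inf le_sup_left inf_le_left) le_sup_left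
        · exact le_trans (le_inf le_sup_right inf_le_left) le_sup_right
      · exact sup_le inf_le_left inf_le_left
    have hbd : Cm b d := cm_inf om (cm_symm om hfb) (cm_symm om hgb)
    have hdb : Cm d b := cm_symm om hbd
    -- compute f ⊓ b = a ⊓ b etc via FH
    have hfb1 : b ⊓ f = a ⊓ b := by
      rw [hf]; unfold olEquiv
      rw [fh om (cm_of_le om inf_le_right) (cm_of_le_compl inf_le_right)]
      have h1 : b ⊓ (a ⊓ b) = a ⊓ b := inf_eq_right.mpr inf_le_right
      have h2 : b ⊓ (aᶜ ⊓ bᶜ) = ⊥ := by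
        apply le_antisymm _ bot_le
        have : b ⊓ (aᶜ ⊓ bᶜ) ≤ b ⊓ bᶜ := inf_le_inf_left b inf_le_right
        rwa [ics] at this
      rw [h1, h2, sup_bot_eq]
    have hgb1 : b ⊓ g = b ⊓ c := by
      rw [hg]; unfold olEquiv
      rw [fh om (cm_of_le om inf_le_left) (cm_of_le_compl inf_le_left)]
      have h1 : b ⊓ (b ⊓ c) = b ⊓ c := inf_eq_right.mpr inf_le_left
      have h2 : b ⊓ (bᶜ ⊓ cᶜ) = ⊥ := by
        apply le_antisymm _ bot_le
        have : b ⊓ (bᶜ ⊓ cᶜ) ≤ b ⊓ bᶜ := inf_le_inf_left b inf_le_left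
        rwa [ics] at this
      rw [h1, h2, sup_bot_eq]
    have hfb2 : bᶜ ⊓ f = aᶜ ⊓ bᶜ := by
      rw [hf]; unfold olEquiv
      have hc1 : Cm bᶜ (a ⊓ b) := cm_of_le_compl (by rw [cc]; exact inf_le_right)
      have hc2 : Cm bᶜ (aᶜ ⊓ bᶜ) := cm_of_le om inf_le_right
      rw [fh om hc1 hc2]
      have h1 : bᶜ ⊓ (a ⊓ b) = ⊥ := by
        apply le_antisymm _ bot_le
        have : bᶜ ⊓ (a ⊓ b) ≤ bᶜ ⊓ b := inf_le_inf_left _ inf_le_right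
        rwa [ics'] at this
      have h2 : bᶜ ⊓ (aᶜ ⊓ bᶜ) = aᶜ ⊓ bᶜ := inf_eq_right.mpr inf_le_right
      rw [h1, h2, bot_sup_eq]
    have hgb2 : bᶜ ⊓ g = bᶜ ⊓ cᶜ := by
      rw [hg]; unfold olEquiv
      have hc1 : Cm bᶜ (b ⊓ c) := cm_of_le_compl (by rw [cc]; exact inf_le_left)
      have hc2 : Cm bᶜ (bᶜ ⊓ cᶜ) := cm_of_le om inf_le_left
      rw [fh om hc1 hc2]
      have h1 : bᶜ ⊓ (b ⊓ c) = ⊥ := by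
        apply le_antisymm _ bot_le
        have : bᶜ ⊓ (b ⊓ c) ≤ bᶜ ⊓ b := inf_le_inf_left _ inf_le_left
        rwa [ics'] at this
      have h2 : bᶜ ⊓ (bᶜ ⊓ cᶜ) = bᶜ ⊓ cᶜ := inf_eq_right.mpr inf_le_left
      rw [h1, h2, bot_sup_eq]
    -- d ⊓ b ≤ a ⊓ c, d ⊓ bᶜ ≤ aᶜ ⊓ cᶜ
    have h1 : d ⊓ b ≤ a ⊓ c := by
      refine le_inf ?_ ?_
      · have : d ⊓ b ≤ b ⊓ f := le_inf inf_le_right (le_trans inf_le_left inf_le_left)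
        rw [hfb1] at this
        exact le_trans this inf_le_left
      · have : d ⊓ b ≤ b ⊓ g := le_inf inf_le_right (le_trans inf_le_left inf_le_right)
        rw [hgb1] at this
        exact le_trans this inf_le_right
    have h2 : d ⊓ bᶜ ≤ aᶜ ⊓ cᶜ := by
      refine le_inf ?_ ?_
      · have : d ⊓ bᶜ ≤ bᶜ ⊓ f := le_inf inf_le_right (le_trans inf_le_left inf_le_left)
        rw [hfb2] at this
        exact le_trans this inf_le_left
      · have : d ⊓ bᶜ ≤ bᶜ ⊓ g := le_inf inf_le_right (le_trans inf_le_left inf_le_right)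
        rw [hgb2] at this
        exact le_trans this inf_le_right
    calc d = (d ⊓ b) ⊔ (d ⊓ bᶜ) := hdb
    _ ≤ (a ⊓ c) ⊔ (aᶜ ⊓ cᶜ) := sup_le (le_trans h1 le_sup_left) (le_trans h2 le_sup_right)
    _ = olEquiv a c := rfl
end

section
/- Let L be an ortholattice admitting a strong set of states, i.e., a nonempty set S of states such that for all a, b ∈ L, if m a = 1 implies m b = 1 for every m ∈ S, then a ≤ b. Then L is orthomodular: a ≤ b implies a ⊔ (aᶜ ⊓ b) = b for all a, b ∈ L. -/
/-- A state on an ortholattice: a `[0,1]`-valued function with `m ⊤ = 1` that is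
additive on orthogonal pairs. -/
structure IsState {α : Type*} [Ortholattice α] (m : α → ℝ) : Prop where
  nonneg : ∀ a, 0 ≤ m a
  le_one : ∀ a, m a ≤ 1
  map_top : m ⊤ = 1
  additive : ∀ a b, a ≤ bᶜ → m (a ⊔ b) = m a + m b

lemma ortho_le_compl_compl {α : Type*} [Ortholattice α] (x : α) : x ≤ xᶜᶜ :=
  (Ortholattice.compl_compl x).ge

lemma ortho_demorgan {α : Type*} [Ortholattice α] (x y : α) : (x ⊓ y)ᶜ = xᶜ ⊔ yᶜ := by
  apply le_antisymm
  · have h1 : (xᶜ ⊔ yᶜ)ᶜ ≤ x := by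
      have := Ortholattice.compl_antitone xᶜ (xᶜ ⊔ yᶜ) le_sup_left
      simpa [Ortholattice.compl_compl] using this
    have h2 : (xᶜ ⊔ yᶜ)ᶜ ≤ y := by
      have := Ortholattice.compl_antitone yᶜ (xᶜ ⊔ yᶜ) le_sup_right
      simpa [Ortholattice.compl_compl] using this
    have := Ortholattice.compl_antitone _ _ (le_inf h1 h2)
    simpa [Ortholattice.compl_compl] using this
  · exact sup_le (Ortholattice.compl_antitone _ _ inf_le_left)
      (Ortholattice.compl_antitone _ _ inf_le_right)

lemma state_compl {α : Type*} [Ortholattice α] {m : α → ℝ} (hm : IsState m) (x : α) :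
    m xᶜ = 1 - m x := by
  have h := hm.additive x xᶜ (ortho_le_compl_compl x)
  rw [Ortholattice.sup_compl, hm.map_top] at h
  linarith

/-- An ortholattice admitting a strong set of states is orthomodular. -/
theorem stmt_4 (α : Type*) [Ortholattice α] (S : Set (α → ℝ)) (hne : S.Nonempty)
    (hstate : ∀ m ∈ S, IsState m)
    (hstrong : ∀ a b : α, (∀ m ∈ S, m a = 1 → m b = 1) → a ≤ b) :
    ∀ a b : α, a ≤ b → a ⊔ (aᶜ ⊓ b) = b := by
  intro a b hab
  apply le_antisymm
  · exact sup_le hab inf_le_right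
  · apply hstrong
    intro m hm hb1
    have hS := hstate m hm
    have hbc : m bᶜ = 0 := by rw [state_compl hS, hb1]; ring
    have habc : a ≤ bᶜᶜ := by rwa [Ortholattice.compl_compl]
    have h1 : m (a ⊔ bᶜ) = m a := by
      rw [hS.additive a bᶜ habc, hbc]; ring
    have h2 : m (aᶜ ⊓ b) = 1 - m a := by
      have := state_compl hS (aᶜ ⊓ b)
      rw [ortho_demorgan, Ortholattice.compl_compl, h1] at this
      linarith
    have horth : a ≤ (aᶜ ⊓ b)ᶜ := by
      rw [ortho_demorgan, Ortholattice.compl_compl]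
      exact le_sup_left
    rw [hS.additive a (aᶜ ⊓ b) horth, h2]; ring
end

section
/- Let L be an ortholattice admitting a strong set of states, i.e., a nonempty set S of states such that for all a, b ∈ L, if m a = 1 implies m b = 1 for every m ∈ S, then a ≤ b. Then for every n ≥ 3 Godowski's equation n-Go holds in L: for all a₁, …, aₙ ∈ L (indices taken modulo n), (a₁ →₁ a₂) ⊓ (a₂ →₁ a₃) ⊓ … ⊓ (aₙ₋₁ →₁ aₙ) ⊓ (aₙ →₁ a₁) = (aₙ →₁ aₙ₋₁) ⊓ … ⊓ (a₂ →₁ a₁) ⊓ (a₁ →₁ aₙ). -/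
/-- The Sasaki implication `a →₁ b = aᶜ ⊔ (a ⊓ b)`. -/
def olImp1 {α : Type*} [Ortholattice α] (a b : α) : α := aᶜ ⊔ (a ⊓ b)

section Aux
variable {α : Type*} [Ortholattice α]

lemma state_compl_aux {m : α → ℝ} (hm : IsState m) (a : α) : m aᶜ = 1 - m a := by
  have h := hm.additive a aᶜ (le_of_eq (Ortholattice.compl_compl a).symm)
  rw [Ortholattice.sup_compl, hm.map_top] at h
  linarith

lemma state_mono_aux {m : α → ℝ} (hm : IsState m) {a b : α} (hab : a ≤ b) : m a ≤ m b := by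
  have h := hm.additive a bᶜ (by rw [Ortholattice.compl_compl]; exact hab)
  have h2 := hm.le_one (a ⊔ bᶜ)
  rw [state_compl_aux hm] at h
  linarith

lemma state_imp_one_aux {m : α → ℝ} (hm : IsState m) {a b : α} (h : m (olImp1 a b) = 1) :
    m (a ⊓ b) = m a := by
  have hle : aᶜ ≤ (a ⊓ b)ᶜ := Ortholattice.compl_antitone _ _ inf_le_left
  have h2 := hm.additive aᶜ (a ⊓ b) hle
  rw [state_compl_aux hm] at h2
  rw [olImp1] at h
  linarith [h2 ▸ h]

open Fin.CommRing in
lemma main_le (S : Set (α → ℝ)) (hstate : ∀ m ∈ S, IsState m)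
    (hstrong : ∀ a b : α, (∀ m ∈ S, m a = 1 → m b = 1) → a ≤ b)
    (n : ℕ) (a : Fin (n + 3) → α) :
    (Finset.univ.inf fun i => olImp1 (a i) (a (i + 1))) ≤
      (Finset.univ.inf fun i => olImp1 (a (i + 1)) (a i)) := by
  apply Finset.le_inf
  intro j _
  apply hstrong
  intro f hf h1
  have hfS := hstate f hf
  -- each cyclic term has measure 1
  have hterm : ∀ i : Fin (n + 3), f (olImp1 (a i) (a (i + 1))) = 1 := by
    intro i
    have hle := state_mono_aux hfS (Finset.inf_le (Finset.mem_univ i)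
      (f := fun i => olImp1 (a i) (a (i + 1))))
    have := hfS.le_one (olImp1 (a i) (a (i + 1)))
    linarith [h1 ▸ hle]
  have hinf : ∀ i : Fin (n + 3), f (a i ⊓ a (i + 1)) = f (a i) :=
    fun i => state_imp_one_aux hfS (hterm i)
  have step : ∀ i : Fin (n + 3), f (a i) ≤ f (a (i + 1)) := by
    intro i
    have := state_mono_aux hfS (inf_le_right : a i ⊓ a (i + 1) ≤ a (i + 1))
    linarith [hinf i]
  have chain : ∀ (k : ℕ) (i : Fin (n + 3)), f (a i) ≤ f (a (i + (k : Fin (n + 3)))) := by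
    intro k
    induction k with
    | zero => simp
    | succ k ih =>
      intro i
      have h2 : (((k + 1 : ℕ)) : Fin (n + 3)) = (k : Fin (n + 3)) + 1 := by push_cast; ring
      rw [h2, ← add_assoc]
      exact le_trans (ih i) (step _)
  have heq : ∀ i : Fin (n + 3), f (a (i + 1)) = f (a i) := by
    intro i
    refine le_antisymm ?_ (step i)
    have hc := chain (n + 2) (i + 1)
    have h3 : i + 1 + ((n + 2 : ℕ) : Fin (n + 3)) = i := by
      have h0 : ((n + 3 : ℕ) : Fin (n + 3)) = 0 := Fin.natCast_self _
      have h4 : ((n + 2 : ℕ) : Fin (n + 3)) + 1 = 0 := by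
        rw [← Nat.cast_add_one]; exact h0
      have h5 : ((n + 2 : ℕ) : Fin (n + 3)) = -1 := eq_neg_of_add_eq_zero_left h4
      rw [h5]; ring
    rwa [h3] at hc
  -- now show the target
  have hadd := hfS.additive (a (j + 1))ᶜ (a (j + 1) ⊓ a j)
    (Ortholattice.compl_antitone _ _ inf_le_left)
  rw [olImp1, hadd, state_compl_aux hfS, inf_comm, hinf j, heq j]
  ring

end Aux

/-- In an ortholattice admitting a strong set of states, Godowski'\''s equations n-Go
hold for every n ≥ 3 (here n = m + 3, indices cyclic modulo n). -/
theorem stmt_5 (α : Type*) [Ortholattice α] (S : Set (α → ℝ)) (hne : S.Nonempty)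
    (hstate : ∀ m ∈ S, IsState m)
    (hstrong : ∀ a b : α, (∀ m ∈ S, m a = 1 → m b = 1) → a ≤ b) :
    ∀ (m : ℕ) (a : Fin (m + 3) → α),
      (Finset.univ.inf fun i => olImp1 (a i) (a (i + 1))) =
        (Finset.univ.inf fun i => olImp1 (a (i + 1)) (a i)) := by
  intro m a
  refine le_antisymm (main_le S hstate hstrong m a) ?_
  have H2 := main_le S hstate hstrong m (fun i => a (-i))
  -- reindex by the involution e i = -i - 1
  let e : Fin (m + 3) ≃ Fin (m + 3) :=
    ⟨fun i => -i - 1, fun i => -i - 1, fun i => by simp, fun i => by simp⟩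
  have hmap : (Finset.univ.map e.toEmbedding) = Finset.univ := Finset.map_univ_equiv e
  have key : ∀ (g : Fin (m + 3) → α), Finset.univ.inf (g ∘ e) = Finset.univ.inf g := by
    intro g
    conv_rhs => rw [← hmap]
    rw [Finset.inf_map]
    rfl
  have hF : ((fun i => olImp1 (a (-i)) (a (-(i + 1)))) : Fin (m+3) → α)
      = (fun i => olImp1 (a (i + 1)) (a i)) ∘ e := by
    funext i
    show olImp1 (a (-i)) (a (-(i + 1))) = olImp1 (a ((-i - 1) + 1)) (a (-i - 1))
    open Fin.CommRing in
    have e1 : (-i : Fin (m + 3)) = (-i - 1) + 1 := by ring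
    open Fin.CommRing in
    have e2 : (-(i + 1) : Fin (m + 3)) = -i - 1 := by ring
    rw [e2, ← e1]
  have hG : ((fun i => olImp1 (a (-(i + 1))) (a (-i))) : Fin (m+3) → α)
      = (fun i => olImp1 (a i) (a (i + 1))) ∘ e := by
    funext i
    show olImp1 (a (-(i + 1))) (a (-i)) = olImp1 (a (-i - 1)) (a ((-i - 1) + 1))
    open Fin.CommRing in
    have e1 : (-i : Fin (m + 3)) = (-i - 1) + 1 := by ring
    open Fin.CommRing in
    have e2 : (-(i + 1) : Fin (m + 3)) = -i - 1 := by ring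
    rw [e2, ← e1]
  rw [hF, hG, key, key] at H2
  exact H2
end

section
/- Let H be a complex Hilbert space (a complete inner product space over ℂ) and let A and B be closed subspaces of H with ¬(A ≤ B). Then there exists a unit vector u ∈ A such that ‖P_B u‖ < 1, where P_B denotes the orthogonal projection onto B. Consequently the state m(C) := ‖P_C u‖² on the lattice of closed subspaces satisfies m(A) = 1 and m(B) < 1, so the lattice of closed subspaces of H admits a strong set of states. -/
/-- If `A` and `B` are closed subspaces of a complex Hilbert space with `¬ A ≤ B`, then
there is a unit vector `u ∈ A` whose orthogonal projection onto `B` has norm `< 1`;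
consequently the state `m C := ‖P_C u‖²` satisfies `m A = 1` and `m B < 1`, so the
lattice of closed subspaces admits a strong set of states. -/
theorem stmt_6 {H : Type*} [NormedAddCommGroup H] [InnerProductSpace ℂ H] [CompleteSpace H]
    (A B : Submodule ℂ H) (hA : IsClosed (A : Set H)) (hB : IsClosed (B : Set H))
    (hAB : ¬ A ≤ B) :
    haveI : CompleteSpace A := hA.completeSpace_coe
    haveI : CompleteSpace B := hB.completeSpace_coe
    ∃ u : H, u ∈ A ∧ ‖u‖ = 1 ∧ ‖(Submodule.orthogonalProjectionOnto B u : H)‖ < 1 ∧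
      ‖(Submodule.orthogonalProjectionOnto A u : H)‖ ^ 2 = 1 ∧ ‖(Submodule.orthogonalProjectionOnto B u : H)‖ ^ 2 < 1 := by
  haveI : CompleteSpace A := hA.completeSpace_coe
  haveI : CompleteSpace B := hB.completeSpace_coe
  obtain ⟨x, hxA, hxB⟩ := SetLike.not_le_iff_exists.mp hAB
  have hx0 : x ≠ 0 := fun h => hxB (h ▸ B.zero_mem)
  have hnx : ‖x‖ ≠ 0 := norm_ne_zero_iff.mpr hx0
  set u : H := (‖x‖⁻¹ : ℂ) • x with hu
  have huA : u ∈ A := A.smul_mem _ hxA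
  have hun : ‖u‖ = 1 := by
    rw [hu, norm_smul]
    simp [norm_inv, inv_mul_cancel₀ hnx]
  have huB : u ∉ B := fun h => by
    have : x = (‖x‖ : ℂ) • u := by
      rw [hu, smul_smul]
      rw [mul_inv_cancel₀ (by exact_mod_cast hnx), one_smul]
    exact hxB (this ▸ B.smul_mem _ h)
  have hsq := Submodule.orthogonalProjectionFn_norm_sq B u
  rw [Submodule.orthogonalProjectionFn_eq] at hsq
  have hne : u - (Submodule.orthogonalProjectionOnto B u : H) ≠ 0 := by
    intro h
    exact huB (Submodule.starProjection_eq_self_iff.mp (by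
      have := sub_eq_zero.mp h; exact this.symm))
  have hpos : 0 < ‖u - (Submodule.orthogonalProjectionOnto B u : H)‖ := norm_pos_iff.mpr hne
  clear hAB hxB huB hx0
  have hlt : ‖(Submodule.orthogonalProjectionOnto B u : H)‖ < 1 := by
    nlinarith [norm_nonneg ((Submodule.orthogonalProjectionOnto B u : H)), hun]
  have hPA : (Submodule.orthogonalProjectionOnto A u : H) = u := Submodule.starProjection_eq_self_iff.mpr huA
  refine ⟨u, huA, hun, hlt, by rw [hPA, hun]; norm_num, ?_⟩
  nlinarith [norm_nonneg ((Submodule.orthogonalProjectionOnto B u : H))]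
end

section
/- Let L be an orthomodular ortholattice, let n ≥ 2, and let a₁, …, aₙ ∈ L. Then (a₁ ≡ a₂) ⊓ (a₂ ≡ a₃) ⊓ … ⊓ (aₙ₋₁ ≡ aₙ) = (a₁ ⊓ a₂ ⊓ … ⊓ aₙ) ⊔ (a₁ᶜ ⊓ a₂ᶜ ⊓ … ⊓ aₙᶜ). -/
namespace OLaux
variable {α : Type*} [Ortholattice α]

local notation "cc" => Ortholattice.compl_compl (α := α)
local notation "anti" => Ortholattice.compl_antitone (α := α)

lemma le_compl_of_le_compl {x y : α} (h : x ≤ yᶜ) : y ≤ xᶜ := by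
  have := anti _ _ h; rwa [Ortholattice.compl_compl] at this

lemma inf_compl' (x y : α) (h : x ≤ yᶜ) : x ⊓ y = ⊥ := by
  have h2 : x ⊓ y ≤ yᶜ ⊓ y := inf_le_inf_right _ h
  have h3 : yᶜ ⊓ y = ⊥ := by rw [inf_comm]; exact Ortholattice.inf_compl y
  rw [h3] at h2
  exact le_bot_iff.mp h2

lemma compl_inf (x y : α) : (x ⊓ y)ᶜ = xᶜ ⊔ yᶜ := by
  apply le_antisymm
  · -- (x⊓y)ᶜ ≤ xᶜ⊔yᶜ ⟸ (xᶜ⊔yᶜ)ᶜ ≤ x⊓y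
    have h1 : (xᶜ ⊔ yᶜ)ᶜ ≤ x := by
      have := anti _ _ (le_sup_left : xᶜ ≤ xᶜ ⊔ yᶜ)
      rwa [Ortholattice.compl_compl] at this
    have h2 : (xᶜ ⊔ yᶜ)ᶜ ≤ y := by
      have := anti _ _ (le_sup_right : yᶜ ≤ xᶜ ⊔ yᶜ)
      rwa [Ortholattice.compl_compl] at this
    have := anti _ _ (le_inf h1 h2)
    rwa [Ortholattice.compl_compl] at this
  · exact sup_le (anti _ _ inf_le_left) (anti _ _ inf_le_right)

lemma compl_sup (x y : α) : (x ⊔ y)ᶜ = xᶜ ⊓ yᶜ := by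
  have := compl_inf xᶜ yᶜ
  rw [Ortholattice.compl_compl, Ortholattice.compl_compl] at this
  rw [← this, Ortholattice.compl_compl]

/-- Commutation. -/
def Com (x y : α) : Prop := x = (x ⊓ y) ⊔ (x ⊓ yᶜ)

lemma com_of_le {x y : α} (h : x ≤ y) : Com x y := by
  unfold Com; rw [inf_eq_left.mpr h]; exact (sup_eq_left.mpr inf_le_left).symm

lemma com_of_le_compl {x y : α} (h : x ≤ yᶜ) : Com x y := by
  unfold Com
  rw [inf_eq_left.mpr h, inf_comm, inf_compl' y x (le_compl_of_le_compl h), bot_sup_eq]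

lemma com_sup {x x' y : α} (h : Com x y) (h' : Com x' y) : Com (x ⊔ x') y := by
  unfold Com at *
  apply le_antisymm
  · calc x ⊔ x' ≤ ((x ⊓ y) ⊔ (x ⊓ yᶜ)) ⊔ ((x' ⊓ y) ⊔ (x' ⊓ yᶜ)) := sup_le_sup h.le h'.le
    _ ≤ ((x ⊔ x') ⊓ y) ⊔ ((x ⊔ x') ⊓ yᶜ) := by
        apply sup_le <;> apply sup_le <;>
          [exact le_sup_of_le_left (inf_le_inf_right _ le_sup_left);
           exact le_sup_of_le_right (inf_le_inf_right _ le_sup_left);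
           exact le_sup_of_le_left (inf_le_inf_right _ le_sup_right);
           exact le_sup_of_le_right (inf_le_inf_right _ le_sup_right)]
  · exact sup_le inf_le_left inf_le_left

lemma com_compl_right {x y : α} (h : Com x y) : Com x yᶜ := by
  unfold Com at *
  rw [Ortholattice.compl_compl, sup_comm]; exact h

lemma com_symm (hOM : ∀ a b : α, a ≤ b → a ⊔ (aᶜ ⊓ b) = b) {x y : α} (h : Com x y) : Com y x := by
  unfold Com at *
  have h1 : x ⊓ y ≤ y := inf_le_right
  have key := hOM _ _ h1
  -- y = (x⊓y) ⊔ ((x⊓y)ᶜ ⊓ y)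
  have h2 : (x ⊓ y)ᶜ ⊓ y ≤ xᶜ := by
    apply le_compl_of_le_compl
    calc x = (x ⊓ y) ⊔ (x ⊓ yᶜ) := h
    _ ≤ (x ⊓ y) ⊔ yᶜ := sup_le_sup_left inf_le_right _
    _ = ((x ⊓ y)ᶜ ⊓ y)ᶜ := by
        rw [compl_inf, Ortholattice.compl_compl]
  have h3 : (x ⊓ y)ᶜ ⊓ y ≤ xᶜ ⊓ y := le_inf h2 inf_le_right
  apply le_antisymm
  · calc y = (x ⊓ y) ⊔ ((x ⊓ y)ᶜ ⊓ y) := key.symm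
    _ ≤ (y ⊓ x) ⊔ (y ⊓ xᶜ) := by
        apply sup_le
        · exact le_sup_of_le_left (le_inf inf_le_right inf_le_left)
        · exact le_sup_of_le_right (le_trans h3 (le_inf inf_le_right inf_le_left))
  · exact sup_le inf_le_left inf_le_left

lemma com_compl_left (hOM : ∀ a b : α, a ≤ b → a ⊔ (aᶜ ⊓ b) = b) {x y : α} (h : Com x y) : Com xᶜ y :=
  com_symm hOM (com_compl_right (com_symm hOM h))

lemma com_inf (hOM : ∀ a b : α, a ≤ b → a ⊔ (aᶜ ⊓ b) = b) {x x' y : α} (h : Com x y) (h' : Com x' y) : Com (x ⊓ x') y := by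
  have := com_compl_left hOM (com_sup (com_compl_left hOM h) (com_compl_left hOM h'))
  rwa [compl_sup, Ortholattice.compl_compl, Ortholattice.compl_compl] at this

/-- Foulis–Holland distributivity. -/
lemma fh (hOM : ∀ a b : α, a ≤ b → a ⊔ (aᶜ ⊓ b) = b) {p q y : α} (hp : Com p y) (hq : Com q y) :
    y ⊓ (p ⊔ q) = (y ⊓ p) ⊔ (y ⊓ q) := by
  set d := (y ⊓ p) ⊔ (y ⊓ q) with hd
  have hdle : d ≤ y ⊓ (p ⊔ q) := by
    apply sup_le
    · exact le_inf inf_le_left (le_sup_of_le_left inf_le_right)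
    · exact le_inf inf_le_left (le_sup_of_le_right inf_le_right)
  have key := hOM _ _ hdle
  -- show dᶜ ⊓ (y ⊓ (p ⊔ q)) = ⊥
  have hsub : p ⊔ q ≤ (dᶜ ⊓ y)ᶜ := by
    rw [compl_inf, Ortholattice.compl_compl]
    apply sup_le
    · calc p = (p ⊓ y) ⊔ (p ⊓ yᶜ) := hp
      _ ≤ d ⊔ yᶜ := sup_le_sup (le_sup_of_le_left (le_inf inf_le_right inf_le_left))
            inf_le_right
    · calc q = (q ⊓ y) ⊔ (q ⊓ yᶜ) := hq
      _ ≤ d ⊔ yᶜ := sup_le_sup (le_sup_of_le_right (le_inf inf_le_right inf_le_left))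
            inf_le_right
  have hbot : dᶜ ⊓ (y ⊓ (p ⊔ q)) = ⊥ := by
    have : dᶜ ⊓ (y ⊓ (p ⊔ q)) ≤ (p ⊔ q) ⊓ (p ⊔ q)ᶜ := by
      apply le_inf
      · exact le_trans inf_le_right inf_le_right
      · have h1 : dᶜ ⊓ (y ⊓ (p ⊔ q)) ≤ dᶜ ⊓ y :=
          le_inf inf_le_left (le_trans inf_le_right inf_le_left)
        exact le_trans h1 (le_compl_of_le_compl hsub)
    rw [Ortholattice.inf_compl] at this
    exact le_bot_iff.mp this
  rw [hbot, sup_bot_eq] at key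
  exact key.symm


lemma key (hOM : ∀ a b : α, a ≤ b → a ⊔ (aᶜ ⊓ b) = b) {p q y z : α}
    (hp : p ≤ y) (hq : q ≤ yᶜ) :
    (p ⊔ q) ⊓ ((y ⊓ z) ⊔ (yᶜ ⊓ zᶜ)) = (p ⊓ z) ⊔ (q ⊓ zᶜ) := by
  set w := p ⊔ q with hw
  set e := (y ⊓ z) ⊔ (yᶜ ⊓ zᶜ) with he
  have hpy : Com p y := com_of_le hp
  have hqy : Com q y := com_of_le_compl hq
  have hwy : Com w y := com_sup hpy hqy
  have hey : Com e y := com_sup (com_of_le inf_le_left) (com_of_le_compl inf_le_left)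
  have hwe : Com (w ⊓ e) y := com_inf hOM hwy hey
  have hyq : y ⊓ q = ⊥ := by
    rw [inf_comm]; exact inf_compl' q y hq
  have hycp : yᶜ ⊓ p = ⊥ := by
    rw [inf_comm]; apply inf_compl' p yᶜ
    rw [Ortholattice.compl_compl]; exact hp
  have hyw : y ⊓ w = p := by
    rw [hw, fh hOM hpy hqy, inf_eq_right.mpr hp, hyq, sup_bot_eq]
  have hycw : yᶜ ⊓ w = q := by
    rw [hw, fh hOM (com_compl_right hpy) (com_compl_right hqy), hycp,
      inf_eq_right.mpr hq, bot_sup_eq]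
  have hye : y ⊓ e = y ⊓ z := by
    rw [he, fh hOM (com_of_le inf_le_left) (com_of_le_compl inf_le_left)]
    have h1 : y ⊓ (y ⊓ z) = y ⊓ z := by rw [← inf_assoc, inf_idem]
    have h2 : y ⊓ (yᶜ ⊓ zᶜ) = ⊥ := by
      rw [← inf_assoc, Ortholattice.inf_compl, bot_inf_eq]
    rw [h1, h2, sup_bot_eq]
  have hyce : yᶜ ⊓ e = yᶜ ⊓ zᶜ := by
    rw [he, fh hOM (com_compl_right (com_of_le inf_le_left))
      (com_compl_right (com_of_le_compl inf_le_left))]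
    have h1 : yᶜ ⊓ (y ⊓ z) = ⊥ := by
      rw [← inf_assoc, inf_comm yᶜ y, Ortholattice.inf_compl, bot_inf_eq]
    have h2 : yᶜ ⊓ (yᶜ ⊓ zᶜ) = yᶜ ⊓ zᶜ := by rw [← inf_assoc, inf_idem]
    rw [h1, h2, bot_sup_eq]
  calc w ⊓ e = ((w ⊓ e) ⊓ y) ⊔ ((w ⊓ e) ⊓ yᶜ) := hwe
  _ = ((y ⊓ w) ⊓ (y ⊓ e)) ⊔ ((yᶜ ⊓ w) ⊓ (yᶜ ⊓ e)) := by
      rw [inf_comm (w ⊓ e) y, inf_comm (w ⊓ e) yᶜ,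
        inf_inf_distrib_left y w e, inf_inf_distrib_left yᶜ w e]
  _ = (p ⊓ (y ⊓ z)) ⊔ (q ⊓ (yᶜ ⊓ zᶜ)) := by rw [hyw, hye, hycw, hyce]
  _ = (p ⊓ z) ⊔ (q ⊓ zᶜ) := by
      have h1 : p ⊓ (y ⊓ z) = p ⊓ z := by
        rw [← inf_assoc, inf_eq_left.mpr hp]
      have h2 : q ⊓ (yᶜ ⊓ zᶜ) = q ⊓ zᶜ := by
        rw [← inf_assoc, inf_eq_left.mpr hq]
      rw [h1, h2]

lemma inf_univ_split {n : ℕ} (f : Fin (n + 1) → α) :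
    Finset.univ.inf f = (Finset.univ.inf fun i : Fin n => f i.castSucc) ⊓ f (Fin.last n) := by
  rw [Fin.univ_castSuccEmb, Finset.inf_cons, Finset.inf_map, inf_comm]
  rfl

end OLaux

/-- In an orthomodular ortholattice, the chained identity on n ≥ 2 variables
(here n = m + 2) equals `(a₁ ⊓ ⋯ ⊓ aₙ) ⊔ (a₁ᶜ ⊓ ⋯ ⊓ aₙᶜ)`. -/
theorem stmt_7 (α : Type*) [Ortholattice α]
    (hOM : ∀ a b : α, a ≤ b → a ⊔ (aᶜ ⊓ b) = b)
    (m : ℕ) (a : Fin (m + 2) → α) :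
    (Finset.univ.inf fun i : Fin (m + 1) => olEquiv (a i.castSucc) (a i.succ)) =
      (Finset.univ.inf fun i => a i) ⊔ (Finset.univ.inf fun i => (a i)ᶜ) := by
  induction m with
  | zero =>
    simp [OLaux.inf_univ_split, olEquiv]
  | succ m ih =>
    set b : Fin (m + 2) → α := fun i => a i.castSucc with hb
    have hedge : (Finset.univ.inf fun i : Fin (m + 2) => olEquiv (a i.castSucc) (a i.succ))
        = (Finset.univ.inf fun i : Fin (m + 1) => olEquiv (b i.castSucc) (b i.succ)) ⊓
          olEquiv (a (Fin.last (m + 1)).castSucc) (a (Fin.last (m + 1)).succ) := by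
      rw [OLaux.inf_univ_split]
      congr 1
    rw [hedge, ih b]
    set p := Finset.univ.inf b with hp'
    set q := Finset.univ.inf (fun i => (b i)ᶜ) with hq'
    have hp : p ≤ a (Fin.last (m + 1)).castSucc :=
      Finset.inf_le (Finset.mem_univ (Fin.last (m + 1)))
    have hq : q ≤ (a (Fin.last (m + 1)).castSucc)ᶜ :=
      Finset.inf_le (Finset.mem_univ (Fin.last (m + 1)))
    rw [show olEquiv (a (Fin.last (m + 1)).castSucc) (a (Fin.last (m + 1)).succ) =
        (a (Fin.last (m + 1)).castSucc ⊓ a (Fin.last (m + 1)).succ) ⊔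
        ((a (Fin.last (m + 1)).castSucc)ᶜ ⊓ (a (Fin.last (m + 1)).succ)ᶜ) from rfl]
    rw [OLaux.key hOM hp hq]
    rw [OLaux.inf_univ_split a, OLaux.inf_univ_split (fun i => (a i)ᶜ)]
    simp only [Fin.succ_last]
    rfl
end

section
/- Fix n ≥ 3. An ortholattice L satisfies Godowski's equation n-Go (for all a₁, …, aₙ ∈ L, (a₁ →₁ a₂) ⊓ … ⊓ (aₙ₋₁ →₁ aₙ) ⊓ (aₙ →₁ a₁) = (aₙ →₁ aₙ₋₁) ⊓ … ⊓ (a₂ →₁ a₁) ⊓ (a₁ →₁ aₙ)) if and only if L satisfies, for all a₁, …, aₙ ∈ L, the identity (a₁ →₁ a₂) ⊓ … ⊓ (aₙ₋₁ →₁ aₙ) ⊓ (aₙ →₁ a₁) = (a₁ ≡ a₂) ⊓ (a₂ ≡ a₃) ⊓ … ⊓ (aₙ₋₁ ≡ aₙ). -/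
namespace GoAux
variable {α : Type*} [Ortholattice α]

lemma cc (x : α) : xᶜᶜ = x := Ortholattice.compl_compl x
lemma anti {x y : α} (h : x ≤ y) : yᶜ ≤ xᶜ := Ortholattice.compl_antitone x y h
lemma le_of_compl_le {x y : α} (h : xᶜ ≤ yᶜ) : y ≤ x := by
  have := anti h; rwa [cc, cc] at this
lemma inf_compl (x : α) : x ⊓ xᶜ = ⊥ := Ortholattice.inf_compl x
lemma sup_compl (x : α) : x ⊔ xᶜ = ⊤ := Ortholattice.sup_compl x
lemma compl_bot : (⊥ : α)ᶜ = ⊤ := by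
  have := sup_compl (⊥ : α); simpa using this
lemma compl_top : (⊤ : α)ᶜ = ⊥ := by
  have := inf_compl (⊤ : α); simpa using this
lemma dm_sup (x y : α) : (x ⊔ y)ᶜ = xᶜ ⊓ yᶜ := by
  apply le_antisymm
  · exact le_inf (anti le_sup_left) (anti le_sup_right)
  · apply le_of_compl_le
    rw [cc]
    exact sup_le (le_of_compl_le (by rw [cc]; exact inf_le_left))
      (le_of_compl_le (by rw [cc]; exact inf_le_right))
lemma dm_inf (x y : α) : (x ⊓ y)ᶜ = xᶜ ⊔ yᶜ := by
  have := dm_sup xᶜ yᶜ; rw [cc, cc] at this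
  rw [← this, cc]

lemma olImp1_bot (y : α) : olImp1 ⊥ y = ⊤ := by
  simp [olImp1, compl_bot]
lemma olImp1_self (x : α) : olImp1 x x = ⊤ := by
  simp [olImp1, sup_compl x |>.symm]; rw [sup_comm, sup_compl]
lemma olEquiv_comm (x y : α) : olEquiv x y = olEquiv y x := by
  simp [olEquiv, inf_comm]
lemma olEquiv_self (x : α) : olEquiv x x = ⊤ := by
  simp [olEquiv, inf_idem]; rw [sup_compl]
lemma olEquiv_le_olImp1 (x y : α) : olEquiv x y ≤ olImp1 x y :=
  sup_le le_sup_right (le_trans inf_le_left le_sup_left)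

end GoAux

namespace GoAux
variable {α : Type*} [Ortholattice α]

section OML
variable (oml1 : ∀ c x : α, c ≤ x → c ⊔ (x ⊓ cᶜ) = x)
include oml1

/-- dual orthomodular law -/
lemma oml2 : ∀ c x : α, c ≤ x → x ⊓ (xᶜ ⊔ c) = c := by
  intro c x h
  have h1 : xᶜ ≤ cᶜ := anti h
  have h2 := oml1 xᶜ cᶜ h1
  rw [cc] at h2
  have h3 := congrArg (·ᶜ) h2
  rw [dm_sup, dm_inf, cc, cc] at h3
  rw [inf_comm, sup_comm] at h3
  rw [inf_comm]
  exact h3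

/-- meet with join of orthogonal parts -/
lemma mjo {u v b : α} (hu : u ≤ b) (hv : v ≤ bᶜ) : (u ⊔ v) ⊓ b = u := by
  apply le_antisymm
  · have h1 : (u ⊔ v) ⊓ b ≤ (u ⊔ bᶜ) ⊓ b :=
      inf_le_inf_right b (sup_le le_sup_left (le_trans hv le_sup_right))
    have h2 : (u ⊔ bᶜ) ⊓ b = u := by
      rw [inf_comm, sup_comm]
      exact oml2 oml1 u b hu
    rw [h2] at h1; exact h1
  · exact le_inf le_sup_left hu

lemma lemma_i (x y : α) : (xᶜ ⊔ (x ⊓ y)) ⊓ (yᶜ ⊔ (x ⊓ y)) ≤ (x ⊓ y) ⊔ (xᶜ ⊓ yᶜ) := by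
  set p := x ⊓ y with hp
  set t := (xᶜ ⊔ p) ⊓ (yᶜ ⊔ p) with ht
  have hpt : p ≤ t := le_inf le_sup_right le_sup_right
  have hdecomp : p ⊔ (t ⊓ pᶜ) = t := oml1 p t hpt
  have hx : (xᶜ ⊔ p) ⊓ pᶜ = xᶜ := by
    have hxp : xᶜ ≤ pᶜ := anti inf_le_left
    have := oml2 oml1 xᶜ pᶜ hxp
    rwa [cc, inf_comm pᶜ, sup_comm] at this
  have hy : (yᶜ ⊔ p) ⊓ pᶜ = yᶜ := by
    have hyp : yᶜ ≤ pᶜ := anti inf_le_right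
    have := oml2 oml1 yᶜ pᶜ hyp
    rwa [cc, inf_comm pᶜ, sup_comm] at this
  have h1 : t ⊓ pᶜ ≤ xᶜ ⊓ yᶜ := by
    apply le_inf
    · calc t ⊓ pᶜ ≤ (xᶜ ⊔ p) ⊓ pᶜ := inf_le_inf_right _ inf_le_left
        _ = xᶜ := hx
    · calc t ⊓ pᶜ ≤ (yᶜ ⊔ p) ⊓ pᶜ := inf_le_inf_right _ inf_le_right
        _ = yᶜ := hy
  calc t = p ⊔ (t ⊓ pᶜ) := hdecomp.symm
    _ ≤ p ⊔ (xᶜ ⊓ yᶜ) := sup_le_sup_left h1 _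

lemma imp_inf_le_equiv (x y : α) : olImp1 x y ⊓ olImp1 y x ≤ olEquiv x y := by
  have := lemma_i oml1 x y
  simpa [olImp1, olEquiv, inf_comm y x] using this

/-- commutation: split form from Cm form -/
lemma split_of_cm {x b : α} (hcm : (x ⊔ bᶜ) ⊓ b = x ⊓ b) :
    x = (x ⊓ b) ⊔ (x ⊓ bᶜ) := by
  set z := (x ⊓ b) ⊔ (x ⊓ bᶜ) with hz
  have hzx : z ≤ x := sup_le inf_le_left inf_le_left
  set r := x ⊓ zᶜ with hr
  have hrb : r ⊓ b = ⊥ := by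
    apply le_antisymm _ bot_le
    have h1 : r ⊓ b ≤ z := le_trans (inf_le_inf_right b inf_le_left) le_sup_left
    have h2 : r ⊓ b ≤ zᶜ := le_trans inf_le_left inf_le_right
    calc r ⊓ b ≤ z ⊓ zᶜ := le_inf h1 h2
      _ = ⊥ := inf_compl z
  have hrbc2 : r ⊓ bᶜ = ⊥ := by
    apply le_antisymm _ bot_le
    have h1 : r ⊓ bᶜ ≤ z := le_trans (inf_le_inf_right bᶜ inf_le_left) le_sup_right
    have h2 : r ⊓ bᶜ ≤ zᶜ := le_trans inf_le_left inf_le_right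
    calc r ⊓ bᶜ ≤ z ⊓ zᶜ := le_inf h1 h2
      _ = ⊥ := inf_compl z
  have hrbc : r ≤ bᶜ := by
    set s := (r ⊔ bᶜ) ⊓ b with hs
    have hsz : s ≤ z := by
      have hx1 : r ⊔ bᶜ ≤ x ⊔ bᶜ := sup_le_sup_right inf_le_left _
      calc s ≤ (x ⊔ bᶜ) ⊓ b := inf_le_inf_right b hx1
        _ = x ⊓ b := hcm
        _ ≤ z := le_sup_left
    have hsb : s ≤ b := inf_le_right
    have hdec : bᶜ ⊔ ((r ⊔ bᶜ) ⊓ bᶜᶜ) = r ⊔ bᶜ := oml1 bᶜ (r ⊔ bᶜ) le_sup_right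
    rw [cc] at hdec
    have hr1 : r ≤ bᶜ ⊔ s := by
      calc r ≤ r ⊔ bᶜ := le_sup_left
        _ = bᶜ ⊔ s := hdec.symm
    have hrs : r ≤ sᶜ := by
      calc r ≤ zᶜ := inf_le_right
        _ ≤ sᶜ := anti hsz
    have hbs : bᶜ ≤ sᶜ := anti hsb
    have hkey := oml2 oml1 bᶜ sᶜ hbs
    rw [cc] at hkey
    calc r ≤ sᶜ ⊓ (s ⊔ bᶜ) := le_inf hrs (le_trans hr1 (by rw [sup_comm]))
      _ = bᶜ := hkey
  have hr0 : r = ⊥ := by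
    rw [← hrbc2]
    exact (inf_eq_left.mpr hrbc).symm
  have := oml1 z x hzx
  rw [← hr, hr0, sup_bot_eq] at this
  exact this.symm

/-- Cm form from split form -/
lemma cm_of_split {x b : α} (hs : x = (x ⊓ b) ⊔ (x ⊓ bᶜ)) :
    (x ⊔ bᶜ) ⊓ b = x ⊓ b := by
  have h1 : x ⊔ bᶜ = (x ⊓ b) ⊔ bᶜ := by
    conv_lhs => rw [hs]
    rw [sup_assoc]
    congr 1
    exact sup_eq_right.mpr inf_le_right
  rw [h1]
  exact mjo oml1 inf_le_right le_rfl

omit oml1 in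
/-- Cm is closed under meets -/
lemma cm_inf {x y b : α} (hx : (x ⊔ bᶜ) ⊓ b = x ⊓ b) (hy : (y ⊔ bᶜ) ⊓ b = y ⊓ b) :
    (x ⊓ y ⊔ bᶜ) ⊓ b = (x ⊓ y) ⊓ b := by
  apply le_antisymm
  · have h1 : x ⊓ y ⊔ bᶜ ≤ (x ⊔ bᶜ) ⊓ (y ⊔ bᶜ) :=
      sup_le (le_inf (le_trans inf_le_left le_sup_left) (le_trans inf_le_right le_sup_left))
        (le_inf le_sup_right le_sup_right)
    calc (x ⊓ y ⊔ bᶜ) ⊓ b ≤ ((x ⊔ bᶜ) ⊓ (y ⊔ bᶜ)) ⊓ b := inf_le_inf_right b h1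
      _ ≤ ((x ⊔ bᶜ) ⊓ b) ⊓ ((y ⊔ bᶜ) ⊓ b) := by
          apply le_inf
          · exact inf_le_inf_right b inf_le_left
          · exact inf_le_inf_right b inf_le_right
      _ = (x ⊓ b) ⊓ (y ⊓ b) := by rw [hx, hy]
      _ ≤ (x ⊓ y) ⊓ b := by
          apply le_inf
          · exact le_inf (le_trans inf_le_left inf_le_left) (le_trans inf_le_right inf_le_left)
          · exact le_trans inf_le_left inf_le_right
  · exact inf_le_inf_right b le_sup_left

/-- olEquiv x y splits over y -/
lemma equiv_split (x y : α) : olEquiv x y = (olEquiv x y ⊓ y) ⊔ (olEquiv x y ⊓ yᶜ) := by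
  have h1 : olEquiv x y ⊓ y = x ⊓ y := by
    unfold olEquiv
    exact mjo oml1 inf_le_right inf_le_right
  have h2 : olEquiv x y ⊓ yᶜ = xᶜ ⊓ yᶜ := by
    unfold olEquiv
    rw [sup_comm]
    refine mjo oml1 inf_le_right ?_
    rw [cc]; exact inf_le_right
  rw [h1, h2]
  rfl

lemma equiv_inf_right (x y : α) : olEquiv x y ⊓ y = x ⊓ y := by
  unfold olEquiv
  exact mjo oml1 inf_le_right inf_le_right

lemma equiv_inf_right_compl (x y : α) : olEquiv x y ⊓ yᶜ = xᶜ ⊓ yᶜ := by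
  unfold olEquiv
  rw [sup_comm]
  refine mjo oml1 inf_le_right ?_
  rw [cc]; exact inf_le_right

lemma equiv_trans (x y z : α) : olEquiv x y ⊓ olEquiv y z ≤ olEquiv x z := by
  set e := olEquiv x y
  set f := olEquiv y z
  have hfe : f = olEquiv z y := olEquiv_comm y z
  have cme : (e ⊔ yᶜ) ⊓ y = e ⊓ y := cm_of_split oml1 (equiv_split oml1 x y)
  have cmf : (f ⊔ yᶜ) ⊓ y = f ⊓ y := by
    rw [hfe]; exact cm_of_split oml1 (equiv_split oml1 z y)
  have cmd : (e ⊓ f ⊔ yᶜ) ⊓ y = (e ⊓ f) ⊓ y := cm_inf cme cmf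
  have hsplit : e ⊓ f = (e ⊓ f ⊓ y) ⊔ (e ⊓ f ⊓ yᶜ) := split_of_cm oml1 cmd
  have h1 : e ⊓ f ⊓ y ≤ x ⊓ z := by
    have he : e ⊓ y = x ⊓ y := equiv_inf_right oml1 x y
    have hf : f ⊓ y = z ⊓ y := by rw [hfe]; exact equiv_inf_right oml1 z y
    apply le_inf
    · calc e ⊓ f ⊓ y ≤ e ⊓ y := inf_le_inf_right y inf_le_left
        _ = x ⊓ y := he
        _ ≤ x := inf_le_left
    · calc e ⊓ f ⊓ y ≤ f ⊓ y := inf_le_inf_right y inf_le_right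
        _ = z ⊓ y := hf
        _ ≤ z := inf_le_left
  have h2 : e ⊓ f ⊓ yᶜ ≤ xᶜ ⊓ zᶜ := by
    have he : e ⊓ yᶜ = xᶜ ⊓ yᶜ := equiv_inf_right_compl oml1 x y
    have hf : f ⊓ yᶜ = zᶜ ⊓ yᶜ := by rw [hfe]; exact equiv_inf_right_compl oml1 z y
    apply le_inf
    · calc e ⊓ f ⊓ yᶜ ≤ e ⊓ yᶜ := inf_le_inf_right yᶜ inf_le_left
        _ = xᶜ ⊓ yᶜ := he
        _ ≤ xᶜ := inf_le_left
    · calc e ⊓ f ⊓ yᶜ ≤ f ⊓ yᶜ := inf_le_inf_right yᶜ inf_le_right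
        _ = zᶜ ⊓ yᶜ := hf
        _ ≤ zᶜ := inf_le_left
  calc e ⊓ f = (e ⊓ f ⊓ y) ⊔ (e ⊓ f ⊓ yᶜ) := hsplit
    _ ≤ (x ⊓ z) ⊔ (xᶜ ⊓ zᶜ) := sup_le_sup h1 h2

end OML
end GoAux

namespace GoAux
variable {α : Type*} [Ortholattice α]

lemma inf_eq_pair {n : ℕ} [NeZero n] (f : Fin n → α) (i j : Fin n)
    (h : ∀ k, k ≠ i → k ≠ j → f k = ⊤) :
    Finset.univ.inf f = f i ⊓ f j := by
  apply le_antisymm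
  · exact le_inf (Finset.inf_le (Finset.mem_univ i)) (Finset.inf_le (Finset.mem_univ j))
  · apply Finset.le_inf
    intro k _
    by_cases hki : k = i
    · subst hki; exact inf_le_left
    by_cases hkj : k = j
    · subst hkj; exact inf_le_right
    · rw [h k hki hkj]; exact le_top

lemma inf_reindex {β : Type*} [Fintype β] (e : β ≃ β) (f g : β → α)
    (h : ∀ j, f (e j) = g j) : Finset.univ.inf f = Finset.univ.inf g := by
  apply le_antisymm
  · apply Finset.le_inf
    intro j _
    exact le_trans (Finset.inf_le (Finset.mem_univ (e j))) (le_of_eq (h j))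
  · apply Finset.le_inf
    intro i _
    have := h (e.symm i)
    rw [e.apply_symm_apply] at this
    exact le_trans (Finset.inf_le (Finset.mem_univ (e.symm i))) (le_of_eq this.symm)

end GoAux

section FinLemmas
variable (m : ℕ)

lemma fcs_add_one (i : Fin (m + 2)) : (i.castSucc : Fin (m + 3)) + 1 = i.succ := by
  apply Fin.ext
  simp [Fin.val_add]

lemma flast_add_one : (⟨m + 2, by omega⟩ : Fin (m + 3)) + 1 = 0 := by
  apply Fin.ext
  simp [Fin.val_add]

end FinLemmas

section MoreFin
variable (m : ℕ)

lemma fval1 : ((1 : Fin (m + 3))).val = 1 := by simp [Fin.val_one']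

lemma fadd1 (j : Fin (m + 3)) : (j + 1).val = (j.val + 1) % (m + 3) := by
  rw [Fin.val_add, fval1]

lemma flast_add_one' : (Fin.last (m + 2) : Fin (m + 3)) + 1 = 0 := by
  apply Fin.ext
  simp [Fin.val_add]

end MoreFin

namespace GoAux
variable {α : Type*} [Ortholattice α]

lemma key_of_go (m : ℕ)
    (hGo : ∀ a : Fin (m + 3) → α,
      (Finset.univ.inf fun i => olImp1 (a i) (a (i + 1))) =
        (Finset.univ.inf fun i => olImp1 (a (i + 1)) (a i)))
    (x c : α) : (xᶜ ⊔ (x ⊓ c)) ⊓ cᶜ = (cᶜ ⊔ (c ⊓ x)) ⊓ xᶜ := by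
  set s : Fin (m + 3) → α := fun i => if i.val = 0 then x else if i.val = 1 then c else ⊥ with hs
  have hval0 : ((0 : Fin (m + 3))).val = 0 := rfl
  have hval1 : ((1 : Fin (m + 3))).val = 1 := by
    simp [Fin.val_one']
  have s0 : s 0 = x := by simp [hs]
  have s1 : s 1 = c := by simp [hs, hval1]
  have sbig : ∀ i : Fin (m + 3), i.val ≠ 0 → i.val ≠ 1 → s i = ⊥ := by
    intro i h0 h1
    simp only [hs, h0, h1, ↓reduceIte]
  have hadd : ∀ i : Fin (m + 3), (i + 1).val = (i.val + 1) % (m + 3) := by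
    intro i
    rw [Fin.val_add, hval1]
  -- the forward inf
  have hL : (Finset.univ.inf fun i => olImp1 (s i) (s (i + 1))) = olImp1 x c ⊓ cᶜ := by
    have e0 : olImp1 (s 0) (s (0 + 1)) = olImp1 x c := by
      rw [show (0 : Fin (m + 3)) + 1 = 1 by rw [zero_add], s0, s1]
    have e1 : olImp1 (s 1) (s (1 + 1)) = cᶜ := by
      have h2 : ((1 : Fin (m + 3)) + 1).val = 2 := by
        rw [hadd, hval1]
        exact Nat.mod_eq_of_lt (by omega)
      rw [s1, sbig _ (by rw [h2]; omega) (by rw [h2]; omega)]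
      simp [olImp1]
    rw [inf_eq_pair _ (0 : Fin (m + 3)) 1, e0, e1]
    intro k hk0 hk1
    have hk0' : k.val ≠ 0 := fun h => hk0 (Fin.ext (h.trans hval0.symm))
    have hk1' : k.val ≠ 1 := fun h => hk1 (Fin.ext (h.trans hval1.symm))
    rw [sbig k hk0' hk1', olImp1_bot]
  -- the reversed inf
  have hR : (Finset.univ.inf fun i => olImp1 (s (i + 1)) (s i)) =
      olImp1 c x ⊓ xᶜ := by
    have e0 : olImp1 (s (0 + 1)) (s 0) = olImp1 c x := by
      rw [show (0 : Fin (m + 3)) + 1 = 1 by rw [zero_add], s0, s1]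
    have e1 : olImp1 (s ((⟨m + 2, by omega⟩ : Fin (m + 3)) + 1)) (s ⟨m + 2, by omega⟩) = xᶜ := by
      rw [flast_add_one, s0, sbig ⟨m + 2, by omega⟩ (by simp) (by simp)]
      simp [olImp1]
    rw [inf_eq_pair _ (0 : Fin (m + 3)) ⟨m + 2, by omega⟩, e0, e1]
    intro k hk0 hkl
    have hk0' : k.val ≠ 0 := fun h => hk0 (Fin.ext (h.trans hval0.symm))
    have hkl' : k.val ≠ m + 2 := fun h => hkl (Fin.ext h)
    have hkv : (k + 1).val = k.val + 1 := by
      rw [hadd]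
      have hlt : k.val < m + 2 := by
        have := k.isLt; omega
      exact Nat.mod_eq_of_lt (by omega)
    rw [sbig (k + 1) (by omega) (by omega), olImp1_bot]
  have := hGo s
  rw [hL, hR] at this
  simpa [olImp1] using this

lemma oml1_of_key
    (key : ∀ x c : α, (xᶜ ⊔ (x ⊓ c)) ⊓ cᶜ = (cᶜ ⊔ (c ⊓ x)) ⊓ xᶜ) :
    ∀ c x : α, c ≤ x → c ⊔ (x ⊓ cᶜ) = x := by
  intro c x h
  have h1 := key x c
  rw [inf_eq_right.mpr h] at h1
  rw [inf_comm c x, inf_eq_right.mpr h] at h1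
  rw [sup_comm cᶜ c, sup_compl, top_inf_eq] at h1
  -- h1 : (xᶜ ⊔ c) ⊓ cᶜ = xᶜ
  have h2 := congrArg (·ᶜ) h1
  rw [dm_inf, dm_sup] at h2
  simp only [cc] at h2
  rw [sup_comm]
  exact h2

end GoAux

namespace GoAux

def rev {α : Type*} (m : ℕ) (a : Fin (m + 3) → α) : Fin (m + 3) → α :=
  fun x => a ⟨m + 2 - x.val, by omega⟩

def sig (m : ℕ) : Fin (m + 3) → Fin (m + 3) :=
  fun j => if j.val = m + 2 then j else ⟨m + 1 - j.val, by omega⟩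

def sig2 (m : ℕ) : Fin (m + 2) → Fin (m + 2) :=
  fun i => ⟨m + 1 - i.val, by omega⟩

lemma sig_fix (m : ℕ) (j : Fin (m + 3)) (h : j.val = m + 2) : sig m j = j := by
  simp [sig, h]

lemma sig_val (m : ℕ) (j : Fin (m + 3)) (h : j.val ≠ m + 2) :
    sig m j = ⟨m + 1 - j.val, by omega⟩ := by
  simp [sig, h]

lemma sig_invol (m : ℕ) (j : Fin (m + 3)) : sig m (sig m j) = j := by
  by_cases h : j.val = m + 2
  · rw [sig_fix m j h, sig_fix m j h]
  · have h3 : j.val ≤ m + 1 := by have := j.isLt; omega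
    rw [sig_val m j h, sig_val _ _ (by simp; omega)]
    apply Fin.ext
    simp
    omega

lemma sig2_invol (m : ℕ) (i : Fin (m + 2)) : sig2 m (sig2 m i) = i := by
  have h3 : i.val ≤ m + 1 := by have := i.isLt; omega
  apply Fin.ext
  simp [sig2]
  omega

def sigE (m : ℕ) : Fin (m + 3) ≃ Fin (m + 3) :=
  ⟨sig m, sig m, sig_invol m, sig_invol m⟩

def sig2E (m : ℕ) : Fin (m + 2) ≃ Fin (m + 2) :=
  ⟨sig2 m, sig2 m, sig2_invol m, sig2_invol m⟩

variable {α : Type*} [Ortholattice α]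

lemma hA_lemma (m : ℕ) (a : Fin (m + 3) → α) :
    (Finset.univ.inf fun i => olImp1 (rev m a i) (rev m a (i + 1))) =
      (Finset.univ.inf fun j => olImp1 (a (j + 1)) (a j)) := by
  apply inf_reindex (sigE m)
  intro j
  show olImp1 (rev m a (sig m j)) (rev m a (sig m j + 1)) = olImp1 (a (j + 1)) (a j)
  by_cases h : j.val = m + 2
  · have h1 : sig m j = j := sig_fix m j h
    have h2 : j + 1 = 0 := by
      apply Fin.ext
      rw [fadd1, h]
      simp
    rw [h1, h2]
    have h3 : rev m a j = a 0 := by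
      unfold rev
      congr 1
      apply Fin.ext
      simp [h]
    have h4 : rev m a 0 = a j := by
      unfold rev
      congr 1
      apply Fin.ext
      simp [h]
    rw [h3, h4]
  · have h3 : j.val ≤ m + 1 := by have := j.isLt; omega
    have h1 : sig m j = ⟨m + 1 - j.val, by omega⟩ := sig_val m j h
    have h2 : sig m j + 1 = ⟨m + 2 - j.val, by omega⟩ := by
      rw [h1]
      apply Fin.ext
      rw [fadd1]
      simp only [Fin.val_mk]
      rw [Nat.mod_eq_of_lt (by omega)]
      omega
    have h5 : j + 1 = ⟨j.val + 1, by omega⟩ := by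
      apply Fin.ext
      conv_lhs => rw [fadd1 m j]
      exact Nat.mod_eq_of_lt (by omega)
    have hv1 : (sig m j).val = m + 1 - j.val := by
      have := congrArg Fin.val h1
      simpa using this
    have hv2 : (sig m j + 1).val = m + 2 - j.val := by
      have := congrArg Fin.val h2
      simpa using this
    have h6 : rev m a (sig m j) = a ⟨j.val + 1, by omega⟩ := by
      show a ⟨m + 2 - (sig m j).val, by omega⟩ = a ⟨j.val + 1, by omega⟩
      refine congrArg a (Fin.ext ?_)
      show m + 2 - (sig m j).val = j.val + 1
      omega
    have h7 : rev m a (sig m j + 1) = a j := by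
      show a ⟨m + 2 - (sig m j + 1).val, by omega⟩ = a j
      refine congrArg a (Fin.ext ?_)
      show m + 2 - (sig m j + 1).val = j.val
      omega
    conv_rhs => rw [h5]
    exact congrArg₂ olImp1 h6 h7

lemma hB_lemma (m : ℕ) (a : Fin (m + 3) → α) :
    (Finset.univ.inf fun i : Fin (m + 2) => olEquiv (rev m a i.castSucc) (rev m a i.succ)) =
      (Finset.univ.inf fun i : Fin (m + 2) => olEquiv (a i.castSucc) (a i.succ)) := by
  apply inf_reindex (sig2E m)
  intro i
  show olEquiv (rev m a ((sig2 m i).castSucc)) (rev m a ((sig2 m i).succ)) =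
    olEquiv (a i.castSucc) (a i.succ)
  have h3 : i.val ≤ m + 1 := by have := i.isLt; omega
  have hv1 : ((sig2 m i).castSucc).val = m + 1 - i.val := rfl
  have hv2 : ((sig2 m i).succ).val = m + 1 - i.val + 1 := rfl
  have h6 : rev m a ((sig2 m i).castSucc) = a i.succ := by
    show a ⟨m + 2 - ((sig2 m i).castSucc).val, by omega⟩ = a i.succ
    refine congrArg a (Fin.ext ?_)
    show m + 2 - ((sig2 m i).castSucc).val = (i.succ).val
    have hv3 : (i.succ).val = i.val + 1 := rfl
    omega
  have h7 : rev m a ((sig2 m i).succ) = a i.castSucc := by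
    show a ⟨m + 2 - ((sig2 m i).succ).val, by omega⟩ = a i.castSucc
    refine congrArg a (Fin.ext ?_)
    show m + 2 - ((sig2 m i).succ).val = (i.castSucc).val
    have hv3 : (i.castSucc).val = i.val := rfl
    omega
  rw [olEquiv_comm (a i.castSucc)]
  exact congrArg₂ olEquiv h6 h7

end GoAux



set_option maxHeartbeats 1000000 in
/-- For fixed n ≥ 3 (here n = m + 3), an ortholattice satisfies Godowski'\''s equation
n-Go iff it satisfies the identity equating the Godowski identity with the chained
identity. -/
theorem stmt_8 (α : Type*) [Ortholattice α] (m : ℕ) :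
    (∀ a : Fin (m + 3) → α,
        (Finset.univ.inf fun i => olImp1 (a i) (a (i + 1))) =
          (Finset.univ.inf fun i => olImp1 (a (i + 1)) (a i))) ↔
      (∀ a : Fin (m + 3) → α,
        (Finset.univ.inf fun i => olImp1 (a i) (a (i + 1))) =
          (Finset.univ.inf fun i : Fin (m + 2) => olEquiv (a i.castSucc) (a i.succ))) := by
  constructor
  · -- forward direction
    intro hGo a
    have key := GoAux.key_of_go m hGo
    have oml1 := GoAux.oml1_of_key key
    apply le_antisymm
    · apply Finset.le_inf
      intro i _
      have h1 : (Finset.univ.inf fun k : Fin (m + 3) => olImp1 (a k) (a (k + 1))) ≤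
          olImp1 (a i.castSucc) (a i.succ) := by
        rw [← fcs_add_one m i]
        exact Finset.inf_le (Finset.mem_univ _)
      have h2 : (Finset.univ.inf fun k : Fin (m + 3) => olImp1 (a k) (a (k + 1))) ≤
          olImp1 (a i.succ) (a i.castSucc) := by
        rw [hGo a, ← fcs_add_one m i]
        exact Finset.inf_le (Finset.mem_univ _)
      exact le_trans (le_inf h1 h2) (GoAux.imp_inf_le_equiv oml1 _ _)
    · have chain : ∀ k : ℕ, ∀ hk : k < m + 3,
          (Finset.univ.inf fun i : Fin (m + 2) => olEquiv (a i.castSucc) (a i.succ)) ≤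
            olEquiv (a 0) (a ⟨k, hk⟩) := by
        intro k
        induction k with
        | zero =>
          intro hk
          have h0 : (⟨0, hk⟩ : Fin (m + 3)) = 0 := rfl
          rw [h0, GoAux.olEquiv_self]
          exact le_top
        | succ k ih =>
          intro hk
          have hk' : k < m + 3 := by omega
          have hk2 : k < m + 2 := by omega
          have hstep : (Finset.univ.inf fun i : Fin (m + 2) => olEquiv (a i.castSucc) (a i.succ)) ≤
              olEquiv (a ⟨k, hk'⟩) (a ⟨k + 1, hk⟩) := by
            have hcs : ((⟨k, hk2⟩ : Fin (m + 2)).castSucc : Fin (m + 3)) = ⟨k, hk'⟩ := rfl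
            have hsc : ((⟨k, hk2⟩ : Fin (m + 2)).succ : Fin (m + 3)) = ⟨k + 1, hk⟩ := rfl
            rw [← hcs, ← hsc]
            exact Finset.inf_le (Finset.mem_univ _)
          exact le_trans (le_inf (ih hk') hstep) (GoAux.equiv_trans oml1 _ _ _)
      apply Finset.le_inf
      intro j _
      refine Fin.lastCases ?_ ?_ j
      · -- j = last
        rw [flast_add_one' m]
        have h1 := chain (m + 2) (by omega)
        have h2 : (⟨m + 2, by omega⟩ : Fin (m + 3)) = Fin.last (m + 2) := rfl
        rw [h2] at h1
        calc (Finset.univ.inf fun i : Fin (m + 2) => olEquiv (a i.castSucc) (a i.succ)) ≤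
            olEquiv (a 0) (a (Fin.last (m + 2))) := h1
          _ = olEquiv (a (Fin.last (m + 2))) (a 0) := GoAux.olEquiv_comm _ _
          _ ≤ olImp1 (a (Fin.last (m + 2))) (a 0) := GoAux.olEquiv_le_olImp1 _ _
      · intro i
        rw [fcs_add_one m i]
        exact le_trans (Finset.inf_le (Finset.mem_univ i)) (GoAux.olEquiv_le_olImp1 _ _)
  · -- backward direction
    intro hId a
    calc (Finset.univ.inf fun i => olImp1 (a i) (a (i + 1)))
        = (Finset.univ.inf fun i : Fin (m + 2) => olEquiv (a i.castSucc) (a i.succ)) := hId a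
      _ = (Finset.univ.inf fun i : Fin (m + 2) =>
            olEquiv (GoAux.rev m a i.castSucc) (GoAux.rev m a i.succ)) := (GoAux.hB_lemma m a).symm
      _ = (Finset.univ.inf fun i => olImp1 (GoAux.rev m a i) (GoAux.rev m a (i + 1))) :=
            (hId (GoAux.rev m a)).symm
      _ = (Finset.univ.inf fun i => olImp1 (a (i + 1)) (a i)) := GoAux.hA_lemma m a
end

section
/- Let L be an orthomodular ortholattice. Then L satisfies, for all a, b, c ∈ L, the identity (a →₁ b) ⊓ (b →₁ c) ⊓ (c →₁ a) = (a →₂ b) ⊓ (b →₂ c) ⊓ (c →₂ a) if and only if L satisfies Godowski's equation 3-Go: for all a, b, c ∈ L, (a →₁ b) ⊓ (b →₁ c) ⊓ (c →₁ a) = (c →₁ b) ⊓ (b →₁ a) ⊓ (a →₁ c). -/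
/-- The Dishkant implication `a →₂ b = b ⊔ (aᶜ ⊓ bᶜ)`. -/
def olImp2 {α : Type*} [Ortholattice α] (a b : α) : α := b ⊔ (aᶜ ⊓ bᶜ)

namespace StmtAux10

variable {α : Type*} [Ortholattice α]

private lemma occ (x : α) : xᶜᶜ = x := Ortholattice.compl_compl x

private lemma anti {x y : α} (h : x ≤ y) : yᶜ ≤ xᶜ := Ortholattice.compl_antitone x y h

private lemma dm_sup (x y : α) : (x ⊔ y)ᶜ = xᶜ ⊓ yᶜ := by
  apply le_antisymm
  · exact le_inf (anti le_sup_left) (anti le_sup_right)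
  · have hx : x ≤ (xᶜ ⊓ yᶜ)ᶜ := by
      have := anti (inf_le_left : xᶜ ⊓ yᶜ ≤ xᶜ); rwa [occ] at this
    have hy : y ≤ (xᶜ ⊓ yᶜ)ᶜ := by
      have := anti (inf_le_right : xᶜ ⊓ yᶜ ≤ yᶜ); rwa [occ] at this
    have := anti (sup_le hx hy)
    rwa [occ] at this

private lemma dm_inf (x y : α) : (x ⊓ y)ᶜ = xᶜ ⊔ yᶜ := by
  have h := dm_sup xᶜ yᶜ
  rw [occ, occ] at h
  rw [← h, occ]

/-- dual orthomodular law -/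
private lemma domd (hOM : ∀ a b : α, a ≤ b → a ⊔ (aᶜ ⊓ b) = b)
    {p a : α} (hp : p ≤ a) : a ⊓ (aᶜ ⊔ p) = p := by
  have h := hOM aᶜ pᶜ (anti hp)
  have h2 : (aᶜ ⊔ (aᶜᶜ ⊓ pᶜ))ᶜ = pᶜᶜ := by rw [h]
  simp only [dm_sup, dm_inf, occ] at h2
  exact h2

private lemma lc (hOM : ∀ a b : α, a ≤ b → a ⊔ (aᶜ ⊓ b) = b)
    {p q a : α} (hp : p ≤ a) (hq : q ≤ aᶜ) : (p ⊔ q) ⊓ a = p := by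
  apply le_antisymm
  · have h1 : p ⊔ q ≤ aᶜ ⊔ p := sup_le le_sup_right (le_trans hq le_sup_left)
    calc (p ⊔ q) ⊓ a ≤ (aᶜ ⊔ p) ⊓ a := inf_le_inf_right a h1
      _ = a ⊓ (aᶜ ⊔ p) := inf_comm _ _
      _ = p := domd hOM hp
  · exact le_inf le_sup_left hp

private lemma la (hOM : ∀ a b : α, a ≤ b → a ⊔ (aᶜ ⊓ b) = b)
    {u v a : α} (hu : u ≤ a) (hv : v ≤ aᶜ) :
    (a ⊔ v) ⊓ (aᶜ ⊔ u) = u ⊔ v := by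
  have hav : a ≤ vᶜ := by
    have := anti hv; rwa [occ] at this
  have hvm : v ≤ (a ⊔ v) ⊓ (aᶜ ⊔ u) :=
    le_inf le_sup_right (le_trans hv le_sup_left)
  have h1 : (a ⊔ v) ⊓ vᶜ = a := lc hOM hav (le_of_eq (occ v).symm)
  have h2 : ((a ⊔ v) ⊓ (aᶜ ⊔ u)) ⊓ vᶜ = u := by
    calc (a ⊔ v) ⊓ (aᶜ ⊔ u) ⊓ vᶜ = ((a ⊔ v) ⊓ vᶜ) ⊓ (aᶜ ⊔ u) := inf_right_comm _ _ _
      _ = a ⊓ (aᶜ ⊔ u) := by rw [h1]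
      _ = u := domd hOM hu
  have h3 := hOM v ((a ⊔ v) ⊓ (aᶜ ⊔ u)) hvm
  rw [inf_comm _ vᶜ] at h2
  rw [h2] at h3
  exact h3.symm.trans (sup_comm v u)

private lemma star (hOM : ∀ a b : α, a ≤ b → a ⊔ (aᶜ ⊓ b) = b)
    (a f : α) : f ≤ (a ⊓ (aᶜ ⊔ f)) ⊔ (aᶜ ⊓ (a ⊔ f)) := by
  have hu : a ⊓ (aᶜ ⊔ f) ≤ a := inf_le_left
  have hv : aᶜ ⊓ (a ⊔ f) ≤ aᶜ := inf_le_left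
  have h1 : aᶜ ⊔ (a ⊓ (aᶜ ⊔ f)) = aᶜ ⊔ f := by
    have := hOM aᶜ (aᶜ ⊔ f) le_sup_left
    rwa [occ] at this
  have h2 : a ⊔ (aᶜ ⊓ (a ⊔ f)) = a ⊔ f := hOM a (a ⊔ f) le_sup_left
  have h3 := la hOM hu hv
  rw [h1, h2] at h3
  rw [← h3]
  exact le_inf le_sup_right le_sup_right

private lemma key (hOM : ∀ a b : α, a ≤ b → a ⊔ (aᶜ ⊓ b) = b)
    {X x1 x2 x3 y1 y2 y3 : α}
    (hx1 : x1 ≤ X) (hx2 : x2 ≤ X) (hx3 : x3 ≤ X)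
    (hy1 : y1 ≤ Xᶜ) (hy2 : y2 ≤ Xᶜ) (hy3 : y3 ≤ Xᶜ) :
    (x1 ⊔ y1) ⊓ (x2 ⊔ y2) ⊓ (x3 ⊔ y3) ≤ (x1 ⊓ x2 ⊓ x3) ⊔ (y1 ⊓ y2 ⊓ y3) := by
  set Z := (x1 ⊔ y1) ⊓ (x2 ⊔ y2) ⊓ (x3 ⊔ y3) with hZdef
  have hZ1 : Z ≤ x1 ⊔ y1 := le_trans inf_le_left inf_le_left
  have hZ2 : Z ≤ x2 ⊔ y2 := le_trans inf_le_left inf_le_right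
  have hZ3 : Z ≤ x3 ⊔ y3 := inf_le_right
  have hphiX : ∀ x y : α, x ≤ X → y ≤ Xᶜ → Z ≤ x ⊔ y → X ⊓ (Xᶜ ⊔ Z) ≤ x := by
    intro x y hx hy hZxy
    have h1 : Xᶜ ⊔ Z ≤ Xᶜ ⊔ x :=
      sup_le le_sup_left
        (le_trans hZxy (sup_le le_sup_right (le_trans hy le_sup_left)))
    calc X ⊓ (Xᶜ ⊔ Z) ≤ X ⊓ (Xᶜ ⊔ x) := inf_le_inf_left X h1
      _ = x := domd hOM hx
  have hphiXc : ∀ x y : α, x ≤ X → y ≤ Xᶜ → Z ≤ x ⊔ y → Xᶜ ⊓ (X ⊔ Z) ≤ y := by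
    intro x y hx hy hZxy
    have h1 : X ⊔ Z ≤ X ⊔ y :=
      sup_le le_sup_left
        (le_trans hZxy (sup_le (le_trans hx le_sup_left) le_sup_right))
    have h2 : Xᶜ ⊓ (Xᶜᶜ ⊔ y) = y := domd hOM hy
    rw [occ] at h2
    calc Xᶜ ⊓ (X ⊔ Z) ≤ Xᶜ ⊓ (X ⊔ y) := inf_le_inf_left Xᶜ h1
      _ = y := h2
  have hstar := star hOM X Z
  refine le_trans hstar (sup_le_sup ?_ ?_)
  · exact le_inf (le_inf (hphiX _ _ hx1 hy1 hZ1) (hphiX _ _ hx2 hy2 hZ2))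
      (hphiX _ _ hx3 hy3 hZ3)
  · exact le_inf (le_inf (hphiXc _ _ hx1 hy1 hZ1) (hphiXc _ _ hx2 hy2 hZ2))
      (hphiXc _ _ hx3 hy3 hZ3)

private lemma t2 (hOM : ∀ a b : α, a ≤ b → a ⊔ (aᶜ ⊓ b) = b)
    (b c : α) : (bᶜ ⊔ b ⊓ c) ⊓ cᶜ ≤ bᶜ := by
  have h0 := hOM (b ⊓ c) b inf_le_left
  have h1 : b ≤ (b ⊓ (b ⊓ c)ᶜ) ⊔ c := by
    calc b = (b ⊓ c) ⊔ ((b ⊓ c)ᶜ ⊓ b) := h0.symm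
      _ ≤ (b ⊓ (b ⊓ c)ᶜ) ⊔ c :=
        sup_le (le_trans inf_le_right le_sup_right)
          (le_trans (le_inf inf_le_right inf_le_left) le_sup_left)
  have h2 := anti h1
  rw [dm_sup, dm_inf b ((b ⊓ c)ᶜ), occ (b ⊓ c)] at h2
  exact h2

private lemma l1 (hOM : ∀ a b : α, a ≤ b → a ⊔ (aᶜ ⊓ b) = b)
    (x y : α) :
    (xᶜ ⊔ x ⊓ y) ⊓ (yᶜ ⊔ y ⊓ x) ≤ (x ⊓ y) ⊔ (xᶜ ⊓ yᶜ) := by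
  set g := (xᶜ ⊔ x ⊓ y) ⊓ (yᶜ ⊔ y ⊓ x) with hgdef
  set e := (x ⊓ y) ⊔ (xᶜ ⊓ yᶜ) with hedef
  have hele : e ≤ g := by
    refine sup_le (le_inf le_sup_right ?_)
      (le_inf (le_trans inf_le_left le_sup_left) (le_trans inf_le_right le_sup_left))
    exact le_trans (le_inf inf_le_right inf_le_left) le_sup_right
  have hn1 : g ⊓ eᶜ ≤ xᶜ := by
    have ha : g ⊓ eᶜ ≤ (xᶜ ⊔ x ⊓ y) ⊓ (x ⊓ y)ᶜ :=
      le_inf (le_trans inf_le_left inf_le_left)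
        (le_trans inf_le_right (anti le_sup_left))
    have hb : (xᶜ ⊔ x ⊓ y) ⊓ (x ⊓ y)ᶜ = xᶜ :=
      lc hOM (anti inf_le_left) (le_of_eq (occ (x ⊓ y)).symm)
    rw [hb] at ha; exact ha
  have hn2 : g ⊓ eᶜ ≤ yᶜ := by
    have ha : g ⊓ eᶜ ≤ (yᶜ ⊔ y ⊓ x) ⊓ xᶜ :=
      le_inf (le_trans inf_le_left inf_le_right) hn1
    exact le_trans ha (t2 hOM y x)
  have hn : eᶜ ⊓ g ≤ ⊥ := by
    have hge : eᶜ ⊓ g ≤ g ⊓ eᶜ := le_inf inf_le_right inf_le_left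
    have h1 : eᶜ ⊓ g ≤ e ⊓ eᶜ :=
      le_inf (le_trans hge (le_trans (le_inf hn1 hn2) le_sup_right)) inf_le_left
    rw [Ortholattice.inf_compl] at h1; exact h1
  have h2 := hOM e g hele
  calc g = e ⊔ (eᶜ ⊓ g) := h2.symm
    _ ≤ e ⊔ ⊥ := sup_le_sup_left hn e
    _ = e := sup_bot_eq e

private lemma e0_le_F (a b c : α) :
    (a ⊓ b ⊓ c) ⊔ (aᶜ ⊓ bᶜ ⊓ cᶜ) ≤ (aᶜ ⊔ a ⊓ b) ⊓ (bᶜ ⊔ b ⊓ c) ⊓ (cᶜ ⊔ c ⊓ a) := by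
  refine le_inf (le_inf (sup_le ?_ ?_) (sup_le ?_ ?_)) (sup_le ?_ ?_)
  · exact le_trans inf_le_left le_sup_right
  · exact le_trans (le_trans inf_le_left inf_le_left) le_sup_left
  · exact le_trans (le_inf (le_trans inf_le_left inf_le_right) inf_le_right) le_sup_right
  · exact le_trans (le_trans inf_le_left inf_le_right) le_sup_left
  · exact le_trans (le_inf inf_le_right (le_trans inf_le_left inf_le_left)) le_sup_right
  · exact le_trans inf_le_right le_sup_left

private lemma coreFG (hOM : ∀ a b : α, a ≤ b → a ⊔ (aᶜ ⊓ b) = b) (a b c : α) :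
    ((aᶜ ⊔ a ⊓ b) ⊓ (bᶜ ⊔ b ⊓ c) ⊓ (cᶜ ⊔ c ⊓ a)) ⊓
      ((b ⊔ aᶜ ⊓ bᶜ) ⊓ (c ⊔ bᶜ ⊓ cᶜ) ⊓ (a ⊔ cᶜ ⊓ aᶜ)) ≤
    (a ⊓ b ⊓ c) ⊔ (aᶜ ⊓ bᶜ ⊓ cᶜ) := by
  set W := ((aᶜ ⊔ a ⊓ b) ⊓ (bᶜ ⊔ b ⊓ c) ⊓ (cᶜ ⊔ c ⊓ a)) ⊓
      ((b ⊔ aᶜ ⊓ bᶜ) ⊓ (c ⊔ bᶜ ⊓ cᶜ) ⊓ (a ⊔ cᶜ ⊓ aᶜ)) with hWdef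
  have wA : W ≤ aᶜ ⊔ a ⊓ b := le_trans inf_le_left (le_trans inf_le_left inf_le_left)
  have wB : W ≤ bᶜ ⊔ b ⊓ c := le_trans inf_le_left (le_trans inf_le_left inf_le_right)
  have wC : W ≤ cᶜ ⊔ c ⊓ a := le_trans inf_le_left inf_le_right
  have wD : W ≤ b ⊔ aᶜ ⊓ bᶜ := le_trans inf_le_right (le_trans inf_le_left inf_le_left)
  have wE : W ≤ c ⊔ bᶜ ⊓ cᶜ := le_trans inf_le_right (le_trans inf_le_left inf_le_right)
  have wF : W ≤ a ⊔ cᶜ ⊓ aᶜ := le_trans inf_le_right inf_le_right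
  have hP1 : W ≤ (b ⊓ c) ⊔ (aᶜ ⊓ bᶜ) := by
    have e1 : (b ⊔ aᶜ ⊓ bᶜ) ⊓ (bᶜ ⊔ b ⊓ c) = (b ⊓ c) ⊔ (aᶜ ⊓ bᶜ) :=
      la hOM inf_le_left inf_le_right
    rw [← e1]; exact le_inf wD wB
  have hP2 : W ≤ (c ⊓ a) ⊔ (bᶜ ⊓ cᶜ) := by
    have e1 : (c ⊔ bᶜ ⊓ cᶜ) ⊓ (cᶜ ⊔ c ⊓ a) = (c ⊓ a) ⊔ (bᶜ ⊓ cᶜ) :=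
      la hOM inf_le_left inf_le_right
    rw [← e1]; exact le_inf wE wC
  have hP3 : W ≤ (a ⊓ b) ⊔ (cᶜ ⊓ aᶜ) := by
    have e1 : (a ⊔ cᶜ ⊓ aᶜ) ⊓ (aᶜ ⊔ a ⊓ b) = (a ⊓ b) ⊔ (cᶜ ⊓ aᶜ) :=
      la hOM inf_le_left inf_le_right
    rw [← e1]; exact le_inf wF wA
  have hy1 : aᶜ ⊓ bᶜ ≤ ((b ⊓ c) ⊔ (c ⊓ a) ⊔ (a ⊓ b))ᶜ := by
    rw [dm_sup, dm_sup]
    exact le_inf (le_inf (le_trans inf_le_right (anti inf_le_left))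
      (le_trans inf_le_left (anti inf_le_right))) (le_trans inf_le_left (anti inf_le_left))
  have hy2 : bᶜ ⊓ cᶜ ≤ ((b ⊓ c) ⊔ (c ⊓ a) ⊔ (a ⊓ b))ᶜ := by
    rw [dm_sup, dm_sup]
    exact le_inf (le_inf (le_trans inf_le_left (anti inf_le_left))
      (le_trans inf_le_right (anti inf_le_left))) (le_trans inf_le_left (anti inf_le_right))
  have hy3 : cᶜ ⊓ aᶜ ≤ ((b ⊓ c) ⊔ (c ⊓ a) ⊔ (a ⊓ b))ᶜ := by
    rw [dm_sup, dm_sup]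
    exact le_inf (le_inf (le_trans inf_le_left (anti inf_le_right))
      (le_trans inf_le_left (anti inf_le_left))) (le_trans inf_le_right (anti inf_le_left))
  have hkey := key hOM (X := (b ⊓ c) ⊔ (c ⊓ a) ⊔ (a ⊓ b))
    (le_trans le_sup_left le_sup_left) (le_trans le_sup_right le_sup_left) le_sup_right
    hy1 hy2 hy3
  have hfin : W ≤ ((b ⊓ c) ⊓ (c ⊓ a) ⊓ (a ⊓ b)) ⊔ ((aᶜ ⊓ bᶜ) ⊓ (bᶜ ⊓ cᶜ) ⊓ (cᶜ ⊓ aᶜ)) :=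
    le_trans (le_inf (le_inf hP1 hP2) hP3) hkey
  refine le_trans hfin (sup_le_sup ?_ ?_)
  · exact le_inf inf_le_right
      (le_trans inf_le_left (le_trans inf_le_left inf_le_right))
  · exact le_inf (le_trans inf_le_left inf_le_left)
      (le_trans inf_le_right inf_le_left)

private lemma coreFH (hOM : ∀ a b : α, a ≤ b → a ⊔ (aᶜ ⊓ b) = b) (a b c : α) :
    ((aᶜ ⊔ a ⊓ b) ⊓ (bᶜ ⊔ b ⊓ c) ⊓ (cᶜ ⊔ c ⊓ a)) ⊓
      ((cᶜ ⊔ c ⊓ b) ⊓ (bᶜ ⊔ b ⊓ a) ⊓ (aᶜ ⊔ a ⊓ c)) ≤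
    (a ⊓ b ⊓ c) ⊔ (aᶜ ⊓ bᶜ ⊓ cᶜ) := by
  set W := ((aᶜ ⊔ a ⊓ b) ⊓ (bᶜ ⊔ b ⊓ c) ⊓ (cᶜ ⊔ c ⊓ a)) ⊓
      ((cᶜ ⊔ c ⊓ b) ⊓ (bᶜ ⊔ b ⊓ a) ⊓ (aᶜ ⊔ a ⊓ c)) with hWdef
  have wA : W ≤ aᶜ ⊔ a ⊓ b := le_trans inf_le_left (le_trans inf_le_left inf_le_left)
  have wB : W ≤ bᶜ ⊔ b ⊓ c := le_trans inf_le_left (le_trans inf_le_left inf_le_right)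
  have wC : W ≤ cᶜ ⊔ c ⊓ a := le_trans inf_le_left inf_le_right
  have wD : W ≤ cᶜ ⊔ c ⊓ b := le_trans inf_le_right (le_trans inf_le_left inf_le_left)
  have wE : W ≤ bᶜ ⊔ b ⊓ a := le_trans inf_le_right (le_trans inf_le_left inf_le_right)
  have wF : W ≤ aᶜ ⊔ a ⊓ c := le_trans inf_le_right inf_le_right
  have hP1 : W ≤ (a ⊓ b) ⊔ (aᶜ ⊓ bᶜ) := le_trans (le_inf wA wE) (l1 hOM a b)
  have hP2 : W ≤ (b ⊓ c) ⊔ (bᶜ ⊓ cᶜ) := le_trans (le_inf wB wD) (l1 hOM b c)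
  have hP3 : W ≤ (c ⊓ a) ⊔ (cᶜ ⊓ aᶜ) := le_trans (le_inf wC wF) (l1 hOM c a)
  have hy1 : aᶜ ⊓ bᶜ ≤ ((a ⊓ b) ⊔ (b ⊓ c) ⊔ (c ⊓ a))ᶜ := by
    rw [dm_sup, dm_sup]
    exact le_inf (le_inf (le_trans inf_le_left (anti inf_le_left))
      (le_trans inf_le_right (anti inf_le_left))) (le_trans inf_le_left (anti inf_le_right))
  have hy2 : bᶜ ⊓ cᶜ ≤ ((a ⊓ b) ⊔ (b ⊓ c) ⊔ (c ⊓ a))ᶜ := by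
    rw [dm_sup, dm_sup]
    exact le_inf (le_inf (le_trans inf_le_left (anti inf_le_right))
      (le_trans inf_le_left (anti inf_le_left))) (le_trans inf_le_right (anti inf_le_left))
  have hy3 : cᶜ ⊓ aᶜ ≤ ((a ⊓ b) ⊔ (b ⊓ c) ⊔ (c ⊓ a))ᶜ := by
    rw [dm_sup, dm_sup]
    exact le_inf (le_inf (le_trans inf_le_right (anti inf_le_left))
      (le_trans inf_le_left (anti inf_le_right))) (le_trans inf_le_left (anti inf_le_left))
  have hkey := key hOM (X := (a ⊓ b) ⊔ (b ⊓ c) ⊔ (c ⊓ a))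
    (le_trans le_sup_left le_sup_left) (le_trans le_sup_right le_sup_left) le_sup_right
    hy1 hy2 hy3
  have hfin : W ≤ ((a ⊓ b) ⊓ (b ⊓ c) ⊓ (c ⊓ a)) ⊔ ((aᶜ ⊓ bᶜ) ⊓ (bᶜ ⊓ cᶜ) ⊓ (cᶜ ⊓ aᶜ)) :=
    le_trans (le_inf (le_inf hP1 hP2) hP3) hkey
  refine le_trans hfin (sup_le_sup ?_ ?_)
  · exact le_inf (le_trans inf_le_left inf_le_left)
      (le_trans inf_le_left (le_trans inf_le_right inf_le_right))
  · exact le_inf (le_trans inf_le_left inf_le_left)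
      (le_trans inf_le_left (le_trans inf_le_right inf_le_right))

private lemma inf_rev (x y z : α) : x ⊓ y ⊓ z = z ⊓ y ⊓ x :=
  le_antisymm
    (le_inf (le_inf inf_le_right (le_trans inf_le_left inf_le_right))
      (le_trans inf_le_left inf_le_left))
    (le_inf (le_inf inf_le_right (le_trans inf_le_left inf_le_right))
      (le_trans inf_le_left inf_le_left))

end StmtAux10

open StmtAux10 in
/-- An orthomodular ortholattice satisfies
`(a →₁ b) ⊓ (b →₁ c) ⊓ (c →₁ a) = (a →₂ b) ⊓ (b →₂ c) ⊓ (c →₂ a)` iff it satisfies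
Godowski's equation 3-Go. -/
theorem stmt_10 (α : Type*) [Ortholattice α]
    (hOM : ∀ a b : α, a ≤ b → a ⊔ (aᶜ ⊓ b) = b) :
    (∀ a b c : α,
        olImp1 a b ⊓ olImp1 b c ⊓ olImp1 c a = olImp2 a b ⊓ olImp2 b c ⊓ olImp2 c a) ↔
      (∀ a b c : α,
        olImp1 a b ⊓ olImp1 b c ⊓ olImp1 c a = olImp1 c b ⊓ olImp1 b a ⊓ olImp1 a c) := by
  constructor
  · intro h a b c
    have key1 : ∀ x y z : α,
        (xᶜ ⊔ x ⊓ y) ⊓ (yᶜ ⊔ y ⊓ z) ⊓ (zᶜ ⊔ z ⊓ x) = (x ⊓ y ⊓ z) ⊔ (xᶜ ⊓ yᶜ ⊓ zᶜ) := by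
      intro x y z
      have h1 := h x y z
      simp only [olImp1, olImp2] at h1
      apply le_antisymm
      · exact le_trans (le_inf le_rfl (le_of_eq h1)) (coreFG hOM x y z)
      · exact e0_le_F x y z
    simp only [olImp1]
    rw [key1 a b c, key1 c b a, inf_rev a b c, inf_rev aᶜ bᶜ cᶜ]
  · intro h a b c
    have key2 : ∀ x y z : α,
        (xᶜ ⊔ x ⊓ y) ⊓ (yᶜ ⊔ y ⊓ z) ⊓ (zᶜ ⊔ z ⊓ x) = (x ⊓ y ⊓ z) ⊔ (xᶜ ⊓ yᶜ ⊓ zᶜ) := by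
      intro x y z
      have h1 := h x y z
      simp only [olImp1] at h1
      apply le_antisymm
      · exact le_trans (le_inf le_rfl (le_of_eq h1)) (coreFH hOM x y z)
      · exact e0_le_F x y z
    simp only [olImp1, olImp2]
    rw [key2 a b c]
    have h2 := key2 bᶜ aᶜ cᶜ
    simp only [occ] at h2
    have hrw : (b ⊔ aᶜ ⊓ bᶜ) ⊓ (c ⊔ bᶜ ⊓ cᶜ) ⊓ (a ⊔ cᶜ ⊓ aᶜ)
        = (b ⊔ bᶜ ⊓ aᶜ) ⊓ (a ⊔ aᶜ ⊓ cᶜ) ⊓ (c ⊔ cᶜ ⊓ bᶜ) := by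
      rw [inf_comm aᶜ bᶜ, inf_comm bᶜ cᶜ, inf_comm cᶜ aᶜ, inf_right_comm]
    rw [hrw, h2, sup_comm, inf_comm a b, inf_comm aᶜ bᶜ]
end

section
/- Let L be an orthomodular ortholattice satisfying Godowski's equation 6-Go (for all a₁, …, a₆ ∈ L, (a₁ →₁ a₂) ⊓ (a₂ →₁ a₃) ⊓ (a₃ →₁ a₄) ⊓ (a₄ →₁ a₅) ⊓ (a₅ →₁ a₆) ⊓ (a₆ →₁ a₁) = (a₆ →₁ a₅) ⊓ (a₅ →₁ a₄) ⊓ (a₄ →₁ a₃) ⊓ (a₃ →₁ a₂) ⊓ (a₂ →₁ a₁) ⊓ (a₁ →₁ a₆)). Then for all a, b, c, d, e, f ∈ L with a ≤ bᶜ, b ≤ cᶜ, c ≤ dᶜ, d ≤ eᶜ, e ≤ fᶜ, f ≤ aᶜ, Mayet's equation holds: (a ⊔ b) ⊓ (d ⊔ e)ᶜ ⊓ (((((a ⊔ b) →₁ (d ⊔ e)ᶜ) →₁ ((e ⊔ f) →₁ (b ⊔ c)ᶜ)ᶜ)ᶜ) →₁ (c ⊔ d)) ≤ b ⊔ c ⊔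 (e ⊔ f)ᶜ. -/
section OLAux
variable {α : Type*} [Ortholattice α]

lemma oc_cc (x : α) : xᶜᶜ = x := Ortholattice.compl_compl x

lemma oc_anti {x y : α} (h : x ≤ y) : yᶜ ≤ xᶜ := Ortholattice.compl_antitone x y h

lemma oc_le_compl {x y : α} (h : x ≤ yᶜ) : y ≤ xᶜ := by
  have h' := oc_anti h
  rwa [oc_cc] at h'

lemma oc_dm_sup (x y : α) : (x ⊔ y)ᶜ = xᶜ ⊓ yᶜ := by
  apply le_antisymm
  · exact le_inf (oc_anti le_sup_left) (oc_anti le_sup_right)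
  · have hx : x ≤ (xᶜ ⊓ yᶜ)ᶜ := by
      have h := oc_anti (inf_le_left : xᶜ ⊓ yᶜ ≤ xᶜ); rwa [oc_cc] at h
    have hy : y ≤ (xᶜ ⊓ yᶜ)ᶜ := by
      have h := oc_anti (inf_le_right : xᶜ ⊓ yᶜ ≤ yᶜ); rwa [oc_cc] at h
    have h := oc_anti (sup_le hx hy); rwa [oc_cc] at h

lemma oc_dm_inf (x y : α) : (x ⊓ y)ᶜ = xᶜ ⊔ yᶜ := by
  have h := oc_dm_sup xᶜ yᶜ
  rw [oc_cc, oc_cc] at h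
  rw [← h, oc_cc]

end OLAux

/-- In an orthomodular ortholattice satisfying Godowski'\''s equation 6-Go, Mayet'\''s
Example 3 equation holds. -/
theorem stmt_12 (α : Type*) [Ortholattice α]
    (hOM : ∀ a b : α, a ≤ b → a ⊔ (aᶜ ⊓ b) = b)
    (h6go : ∀ a1 a2 a3 a4 a5 a6 : α,
      olImp1 a1 a2 ⊓ olImp1 a2 a3 ⊓ olImp1 a3 a4 ⊓ olImp1 a4 a5 ⊓ olImp1 a5 a6 ⊓
          olImp1 a6 a1 =
        olImp1 a6 a5 ⊓ olImp1 a5 a4 ⊓ olImp1 a4 a3 ⊓ olImp1 a3 a2 ⊓ olImp1 a2 a1 ⊓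
          olImp1 a1 a6) :
    ∀ a b c d e f : α, a ≤ bᶜ → b ≤ cᶜ → c ≤ dᶜ → d ≤ eᶜ → e ≤ fᶜ → f ≤ aᶜ →
      (a ⊔ b) ⊓ (d ⊔ e)ᶜ ⊓
          olImp1 (olImp1 (olImp1 (a ⊔ b) (d ⊔ e)ᶜ) (olImp1 (e ⊔ f) (b ⊔ c)ᶜ)ᶜ)ᶜ (c ⊔ d) ≤
        b ⊔ c ⊔ (e ⊔ f)ᶜ := by

  intro a b c d e f hab hbc hcd hde hef hfa
  -- abbreviations
  set p := a ⊔ b with hp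
  set q := (d ⊔ e)ᶜ with hq
  set r := e ⊔ f with hr
  set s := (b ⊔ c)ᶜ with hs
  set t := c ⊔ d with ht
  set u := olImp1 p q with hu
  set w := olImp1 r s with hw
  set X := olImp1 u wᶜ with hX
  set v := olImp1 Xᶜ t with hv
  -- basic consequences of orthogonality
  have hcb : c ≤ bᶜ := oc_le_compl hbc
  have haf : a ≤ fᶜ := oc_le_compl hfa
  have hfe : f ≤ eᶜ := oc_le_compl hef
  -- L ≤ basic certain elements
  have hLp : p ⊓ q ⊓ v ≤ p := le_trans inf_le_left inf_le_left
  have hLq : p ⊓ q ⊓ v ≤ q := le_trans inf_le_left inf_le_right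
  have hLv : p ⊓ q ⊓ v ≤ v := inf_le_right
  have hqde : q = dᶜ ⊓ eᶜ := by rw [hq, oc_dm_sup]
  have hLd : p ⊓ q ⊓ v ≤ dᶜ := le_trans hLq (by rw [hqde]; exact inf_le_left)
  have hLe : p ⊓ q ⊓ v ≤ eᶜ := le_trans hLq (by rw [hqde]; exact inf_le_right)
  have hLu : p ⊓ q ⊓ v ≤ u := le_trans inf_le_left (by rw [hu, olImp1]; exact le_sup_right)
  -- rᶜ ≤ w
  have hrw : rᶜ ≤ w := by rw [hw, olImp1]; exact le_sup_left
  have hrwu : rᶜ ≤ w ⊔ uᶜ := le_trans hrw le_sup_left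
  -- F1 : olImp1 rᶜ (w ⊔ uᶜ) = ⊤
  have hF1 : p ⊓ q ⊓ v ≤ olImp1 rᶜ (w ⊔ uᶜ) := by
    rw [olImp1, inf_eq_left.mpr hrwu, oc_cc, Ortholattice.sup_compl]
    exact le_top
  -- Xᶜ = u ⊓ (uᶜ ⊔ w)
  have hXc : Xᶜ = u ⊓ (uᶜ ⊔ w) := by
    rw [hX, olImp1, oc_dm_sup, oc_cc, oc_dm_inf, oc_cc]
  -- F2 : olImp1 (w ⊔ uᶜ) Xᶜ = u
  have hXle : X ᶜ ≤ w ⊔ uᶜ := by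
    rw [hXc, sup_comm w uᶜ]; exact inf_le_right
  have hF2eq : olImp1 (w ⊔ uᶜ) Xᶜ = u := by
    have hom := hOM (u ⊓ wᶜ) u inf_le_left
    rw [oc_dm_inf, oc_cc] at hom
    rw [olImp1, inf_eq_right.mpr hXle, oc_dm_sup, oc_cc, hXc]
    rw [inf_comm wᶜ u, inf_comm u (uᶜ ⊔ w)]
    exact hom
  have hF2 : p ⊓ q ⊓ v ≤ olImp1 (w ⊔ uᶜ) Xᶜ := by rw [hF2eq]; exact hLu
  -- F3 : given
  have hF3 : p ⊓ q ⊓ v ≤ olImp1 Xᶜ t := hLv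
  -- F4 : olImp1 t bᶜ ≥ dᶜ
  have hF4 : p ⊓ q ⊓ v ≤ olImp1 t bᶜ := by
    have h1 : dᶜ = c ⊔ (cᶜ ⊓ dᶜ) := (hOM c dᶜ hcd).symm
    have h2 : c ≤ t ⊓ bᶜ := le_inf (by rw [ht]; exact le_sup_left) hcb
    have h3 : c ⊔ (cᶜ ⊓ dᶜ) ≤ olImp1 t bᶜ := by
      have htc : tᶜ = cᶜ ⊓ dᶜ := by rw [ht, oc_dm_sup]
      rw [olImp1, htc]
      exact sup_le (le_trans h2 le_sup_right) le_sup_left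
    exact le_trans hLd (le_trans (le_of_eq h1) h3)
  -- F5 : olImp1 bᶜ fᶜ ≥ p
  have hF5 : p ⊓ q ⊓ v ≤ olImp1 bᶜ fᶜ := by
    have h1 : p ≤ olImp1 bᶜ fᶜ := by
      rw [olImp1, oc_cc, hp, sup_comm a b]
      exact sup_le le_sup_left (le_trans (le_inf hab haf) le_sup_right)
    exact le_trans hLp h1
  -- F6 : olImp1 fᶜ rᶜ ≥ eᶜ
  have hF6 : p ⊓ q ⊓ v ≤ olImp1 fᶜ rᶜ := by
    have hrc : rᶜ = eᶜ ⊓ fᶜ := by rw [hr, oc_dm_sup]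
    have h1 : fᶜ ⊓ rᶜ = rᶜ := inf_eq_right.mpr (by rw [hrc]; exact inf_le_right)
    have hom := hOM f eᶜ hfe
    rw [olImp1, oc_cc, h1, hrc, inf_comm eᶜ fᶜ, hom]
    exact hLe
  -- assemble Γ
  have hGamma : p ⊓ q ⊓ v ≤
      olImp1 rᶜ (w ⊔ uᶜ) ⊓ olImp1 (w ⊔ uᶜ) Xᶜ ⊓ olImp1 Xᶜ t ⊓ olImp1 t bᶜ ⊓
        olImp1 bᶜ fᶜ ⊓ olImp1 fᶜ rᶜ :=
    le_inf (le_inf (le_inf (le_inf (le_inf hF1 hF2) hF3) hF4) hF5) hF6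
  -- apply 6-Go
  have h6 := h6go rᶜ (w ⊔ uᶜ) Xᶜ t bᶜ fᶜ
  have hRHS : p ⊓ q ⊓ v ≤
      olImp1 fᶜ bᶜ ⊓ olImp1 bᶜ t ⊓ olImp1 t Xᶜ ⊓ olImp1 Xᶜ (w ⊔ uᶜ) ⊓
        olImp1 (w ⊔ uᶜ) rᶜ ⊓ olImp1 rᶜ fᶜ := by
    rw [← h6]; exact hGamma
  have hconc : p ⊓ q ⊓ v ≤ olImp1 (w ⊔ uᶜ) rᶜ :=
    le_trans hRHS (le_trans inf_le_left inf_le_right)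
  -- final: olImp1 (w ⊔ uᶜ) rᶜ ≤ b ⊔ c ⊔ rᶜ
  have hfinal : olImp1 (w ⊔ uᶜ) rᶜ ≤ b ⊔ c ⊔ rᶜ := by
    have hwc : wᶜ ≤ b ⊔ c ⊔ rᶜ := by
      have h1 : wᶜ ≤ (r ⊓ s)ᶜ := by
        rw [hw, olImp1]; exact oc_anti le_sup_right
      have h2 : (r ⊓ s)ᶜ = rᶜ ⊔ (b ⊔ c) := by rw [oc_dm_inf, hs, oc_cc]
      calc wᶜ ≤ (r ⊓ s)ᶜ := h1
        _ = rᶜ ⊔ (b ⊔ c) := h2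
        _ ≤ (b ⊔ c) ⊔ rᶜ := by rw [sup_comm]
        _ = b ⊔ c ⊔ rᶜ := rfl
    rw [olImp1, oc_dm_sup, oc_cc]
    exact sup_le (le_trans inf_le_left hwc) (le_trans inf_le_right le_sup_right)
  exact le_trans hconc hfinal
end

section
/- (a) Let L be an orthomodular ortholattice satisfying the 3OA law: for all a, b, c ∈ L, (a →₁ c) ⊓ (a ≡c b) ≤ b →₁ c. Then for all a, b, c ∈ L: a ≡c b = ⊤ if and only if a →₁ c = b →₁ c. (b) Let L be an orthomodular ortholattice satisfying the 4OA law: for all a, b, c, d ∈ L, (a →₁ d) ⊓ (a ≡(c,d) b) ≤ b →₁ d. Then for all a, b, c, d ∈ L: a ≡(c,d) b = ⊤ if and only if a →₁ d = b →₁ d. -/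
/-- The 3-variable orthoarguesian identity
`a ≡c b = ((a →₁ c) ⊓ (b →₁ c)) ⊔ ((aᶜ →₁ c) ⊓ (bᶜ →₁ c))`. -/
def oa3 {α : Type*} [Ortholattice α] (c a b : α) : α :=
  (olImp1 a c ⊓ olImp1 b c) ⊔ (olImp1 aᶜ c ⊓ olImp1 bᶜ c)

/-- The 4-variable orthoarguesian identity
`a ≡(c,d) b = (a ≡d b) ⊔ ((a ≡d c) ⊓ (b ≡d c))`. -/
def oa4 {α : Type*} [Ortholattice α] (c d a b : α) : α :=
  oa3 d a b ⊔ (oa3 d a c ⊓ oa3 d b c)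


lemma compl_imp1_le {α : Type*} [Ortholattice α] (a c : α) :
    (olImp1 a c)ᶜ ≤ olImp1 aᶜ c := by
  have h1 : aᶜ ≤ olImp1 a c := le_sup_left
  have h2 := Ortholattice.compl_antitone _ _ h1
  rw [Ortholattice.compl_compl] at h2
  calc (olImp1 a c)ᶜ ≤ a := h2
    _ = aᶜᶜ := (Ortholattice.compl_compl a).symm
    _ ≤ olImp1 aᶜ c := le_sup_left

lemma oa3_top {α : Type*} [Ortholattice α] {a b c : α}
    (h : olImp1 a c = olImp1 b c) : oa3 c a b = ⊤ := by
  apply top_le_iff.mp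
  have h1 : (olImp1 a c)ᶜ ≤ olImp1 aᶜ c ⊓ olImp1 bᶜ c :=
    le_inf (compl_imp1_le a c) (h ▸ compl_imp1_le b c)
  have h2 : olImp1 a c ≤ olImp1 a c ⊓ olImp1 b c := le_inf le_rfl (h.le)
  calc (⊤ : α) = olImp1 a c ⊔ (olImp1 a c)ᶜ := (Ortholattice.sup_compl _).symm
    _ ≤ oa3 c a b := sup_le_sup h2 h1

lemma oa3_comm {α : Type*} [Ortholattice α] (a b c : α) :
    oa3 c a b = oa3 c b a := by
  unfold oa3
  rw [inf_comm (olImp1 a c), inf_comm (olImp1 aᶜ c)]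

lemma oa4_comm {α : Type*} [Ortholattice α] (a b c d : α) :
    oa4 c d a b = oa4 c d b a := by
  unfold oa4
  rw [oa3_comm a b, inf_comm (oa3 d a c)]

/-- (a) In any orthomodular ortholattice satisfying the 3OA law,
`a ≡c b = ⊤ ↔ a →₁ c = b →₁ c`.  (b) In any orthomodular ortholattice satisfying
the 4OA law, `a ≡(c,d) b = ⊤ ↔ a →₁ d = b →₁ d`. -/
theorem stmt_18 (α : Type*) [Ortholattice α]
    (hOM : ∀ a b : α, a ≤ b → a ⊔ (aᶜ ⊓ b) = b) :
    ((∀ a b c : α, olImp1 a c ⊓ oa3 c a b ≤ olImp1 b c) →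
        ∀ a b c : α, (oa3 c a b = ⊤ ↔ olImp1 a c = olImp1 b c)) ∧
      ((∀ a b c d : α, olImp1 a d ⊓ oa4 c d a b ≤ olImp1 b d) →
        ∀ a b c d : α, (oa4 c d a b = ⊤ ↔ olImp1 a d = olImp1 b d)) := by
  constructor
  · intro h3 a b c
    constructor
    · intro ht
      apply le_antisymm
      · have := h3 a b c
        rwa [ht, inf_top_eq] at this
      · have := h3 b a c
        rwa [oa3_comm b a, ht, inf_top_eq] at this
    · exact oa3_top
  · intro h4 a b c d
    constructor
    · intro ht
      apply le_antisymm
      · have := h4 a b c d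
        rwa [ht, inf_top_eq] at this
      · have := h4 b a c d
        rwa [oa4_comm b a, ht, inf_top_eq] at this
    · intro h
      apply top_le_iff.mp
      calc (⊤ : α) = oa3 d a b := (oa3_top h).symm
        _ ≤ oa4 c d a b := le_sup_left
end

section
/- Let H be a complex Hilbert space and let a₀, b₀, a₁, b₁, a₂, b₂, a₃, b₃ be closed subspaces of H with aᵢ ⊥ bᵢ for i = 0, 1, 2, 3. For indices i < j in {0, 1, 2}, define Tᵢⱼ := (aᵢ ∨ aⱼ) ∩ (bᵢ ∨ bⱼ) ∩ (((aᵢ ∨ a₃) ∩ (bᵢ ∨ b₃)) ∨ ((aⱼ ∨ a₃) ∩ (bⱼ ∨ b₃))). Then the generalized (5-variable) orthoarguesian equation E₃ holds: (a₀ ∨ b₀) ∩ (a₁ ∨ b₁) ∩ (a₂ ∨ b₂) ∩ (a₃ ∨ b₃) ≤ b₀ ∨ (a₀ ∩ (a₁ ∨ (T₀₁ ∩ (T₀₂ ∨ T₁₂)))). -/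
/-- If `a ⊥ b` with both closed, any element of the closure of `a ⊔ b`
decomposes as a sum of an element of `a` and one of `b`. -/
lemma stmt_19_aux {H : Type*} [NormedAddCommGroup H] [InnerProductSpace ℂ H]
    [CompleteSpace H] (a b : Submodule ℂ H) (ha : IsClosed ((a : Set H)))
    (hb : IsClosed ((b : Set H))) (hab : a ≤ bᗮ) (x : H)
    (hx : x ∈ (a ⊔ b).topologicalClosure) :
    ∃ u ∈ a, ∃ v ∈ b, x = u + v := by
  haveI : CompleteSpace b := hb.completeSpace_coe
  set P := b.orthogonalProjectionOnto with hP
  set f : H →L[ℂ] H := ContinuousLinearMap.id ℂ H - b.subtypeL.comp P with hf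
  have hmaps : ∀ y ∈ (a ⊔ b : Submodule ℂ H), f y ∈ (a : Set H) := by
    intro y hy
    obtain ⟨u, hu, v, hv, rfl⟩ := Submodule.mem_sup.mp hy
    have hPu : P u = 0 :=
      Submodule.orthogonalProjectionOnto_apply_of_mem_orthogonal (hab hu)
    have hPv : (P v : H) = v := by
      exact
        congrArg (Subtype.val) (Submodule.orthogonalProjectionOnto_mem_subspace_eq_self (⟨v, hv⟩ : b))
    have : f (u + v) = u := by
      simp [hf, map_add, hPu, hPv]
    rw [this]; exact hu
  have hfx : f x ∈ (a : Set H) := by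
    have := map_mem_closure f.continuous hx hmaps
    rwa [ha.closure_eq] at this
  refine ⟨f x, hfx, P x, (P x).2, ?_⟩
  simp [hf]

/-- The generalized (5-variable) orthoarguesian equation E₃ holds in the lattice of
closed subspaces of a complex Hilbert space.  Here the join `K ∨ M` is the
topological closure of the subspace sum `K ⊔ M`. -/
theorem stmt_19 {H : Type*} [NormedAddCommGroup H] [InnerProductSpace ℂ H]
    [CompleteSpace H] (a b : Fin 4 → Submodule ℂ H)
    (ha : ∀ i, IsClosed ((a i : Set H))) (hb : ∀ i, IsClosed ((b i : Set H)))
    (hperp : ∀ i, a i ≤ (b i)ᗮ) :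
    let jo : Submodule ℂ H → Submodule ℂ H → Submodule ℂ H :=
      fun K M => (K ⊔ M).topologicalClosure
    let T : Fin 4 → Fin 4 → Submodule ℂ H := fun i j =>
      jo (a i) (a j) ⊓ jo (b i) (b j) ⊓
        jo (jo (a i) (a 3) ⊓ jo (b i) (b 3)) (jo (a j) (a 3) ⊓ jo (b j) (b 3))
    jo (a 0) (b 0) ⊓ jo (a 1) (b 1) ⊓ jo (a 2) (b 2) ⊓ jo (a 3) (b 3) ≤
      jo (b 0) (a 0 ⊓ jo (a 1) (T 0 1 ⊓ jo (T 0 2) (T 1 2))) := by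
  intro jo T x hx
  obtain ⟨⟨⟨h0, h1⟩, h2⟩, h3⟩ := hx
  have hmem : ∀ i : Fin 4, ∃ u ∈ a i, ∃ v ∈ b i, x = u + v := by
    intro i
    apply stmt_19_aux (a i) (b i) (ha i) (hb i) (hperp i)
    fin_cases i
    exacts [h0, h1, h2, h3]
  choose u hu v hv hxuv using hmem
  -- join membership helper
  have hjo : ∀ (K M : Submodule ℂ H) (y : H), y ∈ K ⊔ M → y ∈ jo K M := by
    intro K M y hy
    exact Submodule.le_topologicalClosure _ hy
  have hsup : ∀ (K M : Submodule ℂ H) (y z : H), y ∈ K → z ∈ M → y + z ∈ K ⊔ M := by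
    intro K M y z hy hz
    exact Submodule.add_mem_sup hy hz
  -- differences
  have hda : ∀ i j : Fin 4, u i - u j ∈ jo (a i) (a j) := by
    intro i j
    apply hjo
    exact Submodule.sub_mem _ (Submodule.mem_sup_left (hu i)) (Submodule.mem_sup_right (hu j))
  have hveq : ∀ i j : Fin 4, u i - u j = v j - v i := by
    intro i j
    have h := (hxuv i).symm.trans (hxuv j)
    rw [sub_eq_sub_iff_add_eq_add, h, add_comm]
  have hdb : ∀ i j : Fin 4, u i - u j ∈ jo (b i) (b j) := by
    intro i j
    rw [hveq i j]
    apply hjo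
    exact Submodule.sub_mem _ (Submodule.mem_sup_right (hv j)) (Submodule.mem_sup_left (hv i))
  have hdab : ∀ i j : Fin 4, u i - u j ∈ jo (a i) (a j) ⊓ jo (b i) (b j) := by
    intro i j; exact ⟨hda i j, hdb i j⟩
  have hT : ∀ i j : Fin 4, u i - u j ∈ T i j := by
    intro i j
    refine ⟨hdab i j, ?_⟩
    have : u i - u j = (u i - u 3) + -(u j - u 3) := by abel
    rw [this]
    apply hjo
    exact hsup _ _ _ _ (hdab i 3) (Submodule.neg_mem _ (hdab j 3))
  -- main chain
  have hT01' : u 0 - u 1 ∈ T 0 1 ⊓ jo (T 0 2) (T 1 2) := by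
    refine ⟨hT 0 1, ?_⟩
    have : u 0 - u 1 = (u 0 - u 2) + -(u 1 - u 2) := by abel
    rw [this]
    apply hjo
    exact hsup _ _ _ _ (hT 0 2) (Submodule.neg_mem _ (hT 1 2))
  have hu0 : u 0 ∈ a 0 ⊓ jo (a 1) (T 0 1 ⊓ jo (T 0 2) (T 1 2)) := by
    refine ⟨hu 0, ?_⟩
    have : u 0 = u 1 + (u 0 - u 1) := by abel
    rw [this]
    apply hjo
    exact hsup _ _ _ _ (hu 1) hT01'
  have hxeq : x = v 0 + u 0 := by rw [hxuv 0]; abel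
  rw [hxeq]
  apply hjo
  exact hsup _ _ _ _ (hv 0) hu0
end
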